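/- arXiv:2511.11711 — 12 statements merged into one kernel-verified Lean document; each statement's English description precedes it below -/
import Mathlib

section
/- Let W_1, …, W_p be real numbers, H0 ⊆ {1, …, p}, q > 0, and t > 0 a threshold satisfying (1 + #{j : W_j ≤ −t}) / max(1, #{j : W_j ≥ t}) ≤ q. Then the false discovery proportion at t satisfies the deterministic bound #{j ∈ H0 : W_j ≥ t} / max(1, #{j : W_j ≥ t}) ≤ q · #{j ∈ H0 : W_j ≥ t} / (1 + #{j ∈ H0 : W_j ≤ −t}). -/
open Finset

/-- **Deterministic decomposition step of the knockoff+ FDR proof.**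
Let `W_1, …, W_p` be real numbers, `H0 ⊆ {1, …, p}`, `q > 0`, and `t > 0` a
threshold satisfying `(1 + #{j : W_j ≤ −t}) / max(1, #{j : W_j ≥ t}) ≤ q`.
Then the false discovery proportion at `t` satisfies
`#{j ∈ H0 : W_j ≥ t} / max(1, #{j : W_j ≥ t})
  ≤ q · #{j ∈ H0 : W_j ≥ t} / (1 + #{j ∈ H0 : W_j ≤ −t})`. -/
theorem knockoff_fdp_decomposition {p : ℕ} (W : Fin p → ℝ) (H0 : Finset (Fin p))
    (q t : ℝ) (hq : 0 < q) (ht : 0 < t)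
    (hcond : (1 + ((univ.filter fun j => W j ≤ -t).card : ℝ)) /
        max 1 ((univ.filter fun j => t ≤ W j).card : ℝ) ≤ q) :
    ((H0.filter fun j => t ≤ W j).card : ℝ) /
        max 1 ((univ.filter fun j => t ≤ W j).card : ℝ) ≤
      q * ((H0.filter fun j => t ≤ W j).card : ℝ) /
        (1 + ((H0.filter fun j => W j ≤ -t).card : ℝ)) := by
  set a : ℝ := ((H0.filter fun j => t ≤ W j).card : ℝ) with ha
  set m : ℝ := ((H0.filter fun j => W j ≤ -t).card : ℝ) with hm
  set n : ℝ := ((univ.filter fun j => W j ≤ -t).card : ℝ) with hn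
  set d : ℝ := max 1 ((univ.filter fun j => t ≤ W j).card : ℝ) with hd
  have hmn : m ≤ n := by
    have := Finset.card_le_card (Finset.filter_subset_filter (fun j => W j ≤ -t)
      (H0.subset_univ))
    rw [hm, hn]; exact_mod_cast this
  have ha0 : 0 ≤ a := by positivity
  have hm0 : 0 ≤ m := by positivity
  have hd0 : (0:ℝ) < d := lt_of_lt_of_le one_pos (le_max_left _ _)
  have hm1 : (0:ℝ) < 1 + m := by linarith
  have hqd : 1 + n ≤ q * d := (div_le_iff₀ hd0).mp hcond
  rw [div_le_div_iff₀ hd0 hm1]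
  nlinarith [mul_nonneg ha0 (sub_nonneg.mpr hmn)]
end

section
/- Let n be a natural number, ρ ∈ (0, 1), and let B be a random variable with the binomial distribution with n trials and success probability ρ. Then E[ B / (1 + n − B) ] ≤ ρ / (1 − ρ). -/
open MeasureTheory Finset

/-- **Binomial ratio bound.**
Let `n` be a natural number, `ρ ∈ (0, 1)`, and let `B` be a random variable with the
binomial distribution with `n` trials and success probability `ρ` (that is,
`P(B = k) = C(n,k) ρ^k (1−ρ)^{n−k}` for every `k`).  Then
`E[ B / (1 + n − B) ] ≤ ρ / (1 − ρ)`. -/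
theorem binomial_ratio_expectation_le {Ω : Type*} [MeasurableSpace Ω]
    (P : Measure Ω) [IsProbabilityMeasure P] (n : ℕ) (ρ : ℝ) (hρ : ρ ∈ Set.Ioo 0 1)
    (B : Ω → ℕ) (hB : Measurable B)
    (hlaw : ∀ k : ℕ, P (B ⁻¹' {k}) =
      ENNReal.ofReal ((n.choose k : ℝ) * ρ ^ k * (1 - ρ) ^ (n - k))) :
    ∫ ω, (B ω : ℝ) / (1 + (n : ℝ) - (B ω : ℝ)) ∂P ≤ ρ / (1 - ρ) := by
  obtain ⟨hρ0, hρ1⟩ := hρ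
  have h1ρ : (0:ℝ) < 1 - ρ := by linarith
  set g : ℕ → ℝ := fun k => (k : ℝ) / (1 + (n : ℝ) - (k : ℝ)) with hgdef
  set c : ℕ → ℝ := fun k => (n.choose k : ℝ) * ρ ^ k * (1 - ρ) ^ (n - k) with hcdef
  have hc0 : ∀ k, 0 ≤ c k := fun k =>
    mul_nonneg (mul_nonneg (Nat.cast_nonneg _) (pow_nonneg hρ0.le _)) (pow_nonneg h1ρ.le _)
  -- boundedness of g
  have hgb : ∀ k : ℕ, |g k| ≤ (n : ℝ) + 2 := by
    intro k
    rcases le_or_gt k n with h | h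
    · have hk : (k:ℝ) ≤ n := Nat.cast_le.mpr h
      have hd : (1:ℝ) ≤ 1 + (n:ℝ) - k := by linarith
      have h0 : 0 ≤ g k := div_nonneg (Nat.cast_nonneg _) (by linarith)
      rw [abs_of_nonneg h0]
      have : g k ≤ (k:ℝ) := by
        rw [hgdef]
        rw [div_le_iff₀ (by linarith : (0:ℝ) < 1 + (n:ℝ) - k)]
        nlinarith [Nat.cast_nonneg (α := ℝ) k]
      linarith
    · rcases eq_or_lt_of_le (Nat.succ_le_of_lt h) with h' | h'
      · have : (k:ℝ) = (n:ℝ) + 1 := by exact_mod_cast h'.symm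
        simp only [hgdef, this]
        rw [show (1:ℝ) + n - (n+1) = 0 by ring, div_zero, abs_zero]
        positivity
      · have hk : (n:ℝ) + 2 ≤ k := by exact_mod_cast h'
        have hd : 1 + (n:ℝ) - k < 0 := by linarith
        have h0 : g k ≤ 0 := div_nonpos_of_nonneg_of_nonpos (Nat.cast_nonneg _) hd.le
        rw [abs_of_nonpos h0, hgdef]
        simp only
        rw [neg_div']
        rw [div_le_iff_of_neg hd]
        nlinarith
  have hgmeas : Measurable g := measurable_from_top
  have hmeas : Measurable fun ω => g (B ω) := hgmeas.comp hB
  have hint : Integrable (fun ω => g (B ω)) P := by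
    apply Integrable.mono' (integrable_const ((n:ℝ)+2)) hmeas.aestronglyMeasurable
    filter_upwards with ω using hgb (B ω)
  have hintmap : Integrable g (P.map B) :=
    (integrable_map_measure hgmeas.aestronglyMeasurable hB.aemeasurable).mpr hint
  have hmap : ∫ ω, g (B ω) ∂P = ∑' k, (P (B ⁻¹' {k})).toReal • g k := by
    rw [← integral_map hB.aemeasurable hgmeas.aestronglyMeasurable,
      MeasureTheory.integral_countable' hintmap]
    congr 1; ext k; rw [measureReal_def, Measure.map_apply hB (measurableSet_singleton k)]
  have hterm : ∀ k, (P (B ⁻¹' {k})).toReal • g k = c k * g k := by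
    intro k
    rw [hlaw k, ENNReal.toReal_ofReal (hc0 k), smul_eq_mul]
  have hsum : ∑' k, (P (B ⁻¹' {k})).toReal • g k = ∑ k ∈ range (n+1), c k * g k := by
    simp_rw [hterm]
    apply tsum_eq_sum
    intro k hk
    have : n < k := by simpa using hk
    simp [hcdef, Nat.choose_eq_zero_of_lt this]
  -- termwise identity
  have hkey : ∀ i ∈ range n, c (i+1) * g (i+1) = (ρ / (1 - ρ)) * c i := by
    intro i hi
    have hin : i < n := mem_range.mp hi
    have hinR : (i:ℝ) < n := by exact_mod_cast hin
    have hd : (0:ℝ) < (n:ℝ) - i := by linarith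
    have hden : (1:ℝ) + (n:ℝ) - ((i:ℕ)+1 : ℕ) = (n:ℝ) - i := by push_cast; ring
    have hchoose : (n.choose (i+1) : ℝ) * ((i:ℝ)+1) = (n.choose i : ℝ) * ((n:ℝ) - i) := by
      have h1 := Nat.choose_succ_right_eq n i
      have h2 : ((n.choose (i+1) : ℝ)) * ((i:ℝ)+1) = (n.choose i : ℝ) * ((n - i : ℕ) : ℝ) := by
        exact_mod_cast h1
      rwa [Nat.cast_sub hin.le] at h2
    have hm : n - i = (n - (i+1)) + 1 := by omega
    simp only [hgdef, hcdef]
    rw [hm]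
    push_cast
    rw [show (1:ℝ) + (n:ℝ) - ((i:ℝ)+1) = (n:ℝ) - i by ring]
    field_simp
    linear_combination (ρ^(i+1) * (1-ρ)^(n-(i+1)) * (1-ρ)) * hchoose
  have hbin : ∑ k ∈ range (n+1), c k = 1 := by
    have h : (ρ + (1-ρ))^n = ∑ k ∈ range (n+1), c k := by
      rw [add_pow]
      exact Finset.sum_congr rfl (fun k _ => by simp only [hcdef]; ring)
    rw [← h]
    norm_num
  calc ∫ ω, (B ω : ℝ) / (1 + (n : ℝ) - (B ω : ℝ)) ∂P
      = ∑ k ∈ range (n+1), c k * g k := by rw [show (fun ω => (B ω : ℝ) / (1 + (n : ℝ) - (B ω : ℝ))) = fun ω => g (B ω) from rfl] at *; rw [hmap, hsum]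
    _ = ∑ i ∈ range n, c (i+1) * g (i+1) + c 0 * g 0 := Finset.sum_range_succ' _ n
    _ = (ρ / (1 - ρ)) * ∑ i ∈ range n, c i := by
        rw [show g 0 = 0 by simp [hgdef], mul_zero, add_zero, Finset.mul_sum]
        exact Finset.sum_congr rfl hkey
    _ ≤ (ρ / (1 - ρ)) * ∑ i ∈ range (n+1), c i := by
        apply mul_le_mul_of_nonneg_left _ (div_nonneg hρ0.le h1ρ.le)
        exact Finset.sum_le_sum_of_subset_of_nonneg (by simp [Finset.range_subset]; intro x hx; omega) (fun k _ _ => hc0 k)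
    _ = ρ / (1 - ρ) := by rw [hbin, mul_one]
end

section
/- Let ε_1, …, ε_m be i.i.d. random variables uniform on {−1, +1}. Then E[ #{j : ε_j = +1} / (1 + #{j : ε_j = −1}) ] ≤ 1. -/
open MeasureTheory Finset

private lemma choose_ratio (m k : ℕ) (hk1 : 1 ≤ k) (hk : k ≤ m) :
    (m.choose k : ℝ) * ((k : ℝ) / (1 + ((m - k : ℕ) : ℝ))) = m.choose (k - 1) := by
  have hd : (1 : ℝ) + ((m - k : ℕ) : ℝ) = ((m - k + 1 : ℕ) : ℝ) := by push_cast; ring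
  have hnat : m.choose k * k = m.choose (k - 1) * (m - k + 1) := by
    have := Nat.choose_succ_right_eq m (k - 1)
    rw [Nat.sub_add_cancel hk1] at this
    rw [this]
    congr 1
    omega
  have hpos : (0 : ℝ) < ((m - k + 1 : ℕ) : ℝ) := by positivity
  rw [hd, mul_div_assoc']
  rw [div_eq_iff (ne_of_gt hpos)]
  have h2 := congrArg (Nat.cast : ℕ → ℝ) hnat
  push_cast at h2 ⊢
  linarith

private lemma comb_bound (m : ℕ) :
    ∑ k ∈ range (m + 1), (m.choose k : ℝ) * ((k : ℝ) / (1 + ((m - k : ℕ) : ℝ))) ≤ 2 ^ m := by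
  have hle : ∀ k ∈ range (m + 1),
      (m.choose k : ℝ) * ((k : ℝ) / (1 + ((m - k : ℕ) : ℝ)))
        ≤ if k = 0 then 0 else (m.choose (k - 1) : ℝ) := by
    intro k hk
    rcases Nat.eq_zero_or_pos k with h0 | h1
    · simp [h0]
    · rw [if_neg (by omega), choose_ratio m k h1 (by simpa [Nat.lt_succ_iff] using hk)]
  refine (Finset.sum_le_sum hle).trans ?_
  rw [Finset.sum_range_succ']
  norm_num [Nat.succ_sub_one]
  calc ∑ i ∈ range m, (m.choose i : ℝ) ≤ ∑ i ∈ range (m + 1), (m.choose i : ℝ) := by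
        apply Finset.sum_le_sum_of_subset_of_nonneg (by simp [range_subset]; intro x hx; omega)
        intros; positivity
    _ = 2 ^ m := by
        rw [← Nat.cast_sum, Nat.sum_range_choose]; push_cast; ring

/-- **Fair-coin ratio bound.**
Let `ε_1, …, ε_m` be i.i.d. random variables uniform on `{−1, +1}`.  Then
`E[ #{j : ε_j = +1} / (1 + #{j : ε_j = −1}) ] ≤ 1`. -/
theorem sign_ratio_expectation_le_one {Ω : Type*} [MeasurableSpace Ω]
    (P : Measure Ω) [IsProbabilityMeasure P] (m : ℕ) (ε : Fin m → Ω → ℤ)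
    (hmeas : ∀ j, Measurable (ε j))
    (hindep : ProbabilityTheory.iIndepFun ε P)
    (hplus : ∀ j, P (ε j ⁻¹' {1}) = 1 / 2)
    (hminus : ∀ j, P (ε j ⁻¹' {-1}) = 1 / 2) :
    ∫ ω, ((univ.filter fun j => ε j ω = 1).card : ℝ) /
        (1 + ((univ.filter fun j => ε j ω = -1).card : ℝ)) ∂P ≤ 1 := by
  classical
  set f : ℕ → ℝ := fun k => (k : ℝ) / (1 + ((m - k : ℕ) : ℝ)) with hf
  set E : Finset (Fin m) → Set Ω :=
    fun B => ⋂ j, ε j ⁻¹' ({if j ∈ B then 1 else -1} : Set ℤ) with hE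
  have hEmeas : ∀ B, MeasurableSet (E B) := fun B =>
    MeasurableSet.iInter fun j => (hmeas j) (measurableSet_singleton _)
  -- measure of each pattern event
  have hEmeasure : ∀ B, P (E B) = (1 / 2 : ENNReal) ^ m := by
    intro B
    have := hindep.meas_iInter
      (s := fun j => ε j ⁻¹' ({if j ∈ B then 1 else -1} : Set ℤ))
      (fun j => ⟨{if j ∈ B then 1 else -1}, measurableSet_singleton _, rfl⟩)
    rw [hE]
    rw [this]
    have : ∀ j : Fin m, P (ε j ⁻¹' ({if j ∈ B then 1 else -1} : Set ℤ)) = 1 / 2 := by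
      intro j
      by_cases hj : j ∈ B <;> simp [hj, hplus j, hminus j]
    rw [Finset.prod_congr rfl (fun j _ => this j)]
    simp
  -- the good set
  set G : Set Ω := ⋂ j, ε j ⁻¹' ({-1, 1} : Set ℤ) with hG
  have hGone : ∀ j : Fin m, P (ε j ⁻¹' ({-1, 1} : Set ℤ)) = 1 := by
    intro j
    have hpre : ε j ⁻¹' ({-1, 1} : Set ℤ) = ε j ⁻¹' {-1} ∪ ε j ⁻¹' {1} := by
      rw [← Set.preimage_union]
      congr 1
    rw [hpre, measure_union ?_ ((hmeas j) (measurableSet_singleton _))]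
    · rw [hplus j, hminus j, ENNReal.add_halves]
    · refine Set.disjoint_left.mpr ?_
      intro ω h1 h2
      simp only [Set.mem_preimage, Set.mem_singleton_iff] at h1 h2
      omega
  have hGcompl : P Gᶜ = 0 := by
    rw [hG, Set.compl_iInter]
    refine measure_iUnion_null fun j => ?_
    have hms : MeasurableSet (ε j ⁻¹' ({-1, 1} : Set ℤ)) :=
      (hmeas j) (by measurability)
    rw [measure_compl hms (measure_ne_top P _), hGone j, measure_univ, tsub_self]
  -- pointwise equality on G
  have hpt : ∀ ω ∈ G, ((univ.filter fun j => ε j ω = 1).card : ℝ) /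
        (1 + ((univ.filter fun j => ε j ω = -1).card : ℝ))
      = ∑ B ∈ (univ : Finset (Fin m)).powerset,
          Set.indicator (E B) (fun _ => f B.card) ω := by
    intro ω hω
    have hval : ∀ j : Fin m, ε j ω = -1 ∨ ε j ω = 1 := by
      intro j
      have := Set.mem_iInter.mp hω j
      simpa using this
    set A : Finset (Fin m) := univ.filter fun j => ε j ω = 1 with hA
    have hωEA : ω ∈ E A := by
      rw [hE]
      refine Set.mem_iInter.mpr fun j => ?_
      simp only [Set.mem_preimage, Set.mem_singleton_iff]
      by_cases hj : j ∈ A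
      · rw [if_pos hj]
        exact (mem_filter.mp hj).2
      · rw [if_neg hj]
        rcases hval j with h | h
        · exact h
        · exact absurd (mem_filter.mpr ⟨mem_univ j, h⟩) hj
    have hsum : ∑ B ∈ (univ : Finset (Fin m)).powerset,
        Set.indicator (E B) (fun _ => f B.card) ω = f A.card := by
      refine Finset.sum_eq_single_of_mem A (by simp) ?_ |>.trans
        (Set.indicator_of_mem hωEA _)
      intro B _ hBA
      refine Set.indicator_of_notMem ?_ _
      intro hωEB
      apply hBA
      ext j
      have hj := Set.mem_iInter.mp hωEB j
      simp only [Set.mem_preimage, Set.mem_singleton_iff] at hj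
      constructor
      · intro hjB
        rw [if_pos hjB] at hj
        exact mem_filter.mpr ⟨mem_univ j, hj⟩
      · intro hjA
        by_contra hjB
        rw [if_neg hjB] at hj
        have := (mem_filter.mp hjA).2
        omega
    rw [hsum]
    have hminusA : (univ.filter fun j => ε j ω = -1) = univ \ A := by
      ext j
      simp only [mem_filter, mem_univ, true_and, mem_sdiff, hA]
      rcases hval j with h' | h' <;> simp [h']
    rw [hminusA, card_sdiff_of_subset (subset_univ A), card_univ, Fintype.card_fin]
  -- rewrite the integral
  have hae : (fun ω => ((univ.filter fun j => ε j ω = 1).card : ℝ) /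
        (1 + ((univ.filter fun j => ε j ω = -1).card : ℝ)))
      =ᵐ[P] fun ω => ∑ B ∈ (univ : Finset (Fin m)).powerset,
          Set.indicator (E B) (fun _ => f B.card) ω :=
    Filter.eventuallyEq_of_mem (MeasureTheory.mem_ae_iff.mpr hGcompl) hpt
  rw [integral_congr_ae hae]
  rw [integral_finset_sum _ (fun B _ => (integrable_const (f B.card)).indicator (hEmeas B))]
  have hterm : ∀ B ∈ (univ : Finset (Fin m)).powerset,
      ∫ ω, Set.indicator (E B) (fun _ => f B.card) ω ∂P
        = (1 / 2 : ℝ) ^ m * f B.card := by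
    intro B _
    rw [integral_indicator_const _ (hEmeas B), measureReal_def, hEmeasure B]
    simp [ENNReal.toReal_pow, smul_eq_mul]
  rw [Finset.sum_congr rfl hterm, ← Finset.mul_sum]
  have hpow : ∑ B ∈ (univ : Finset (Fin m)).powerset, f B.card
      = ∑ k ∈ range (m + 1), m.choose k • f k := by
    simpa using Finset.sum_powerset_apply_card f (x := (univ : Finset (Fin m)))
  rw [hpow]
  have hsumle : ∑ k ∈ range (m + 1), m.choose k • f k ≤ 2 ^ m := by
    have := comb_bound m
    simpa [hf, nsmul_eq_mul] using this
  calc (1 / 2 : ℝ) ^ m * ∑ k ∈ range (m + 1), m.choose k • f k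
      ≤ (1 / 2 : ℝ) ^ m * 2 ^ m := by
        apply mul_le_mul_of_nonneg_left hsumle (by positivity)
    _ = 1 := by
        rw [← mul_pow]; norm_num
end

section
/- Let W_1, …, W_p be real random variables, H0 ⊆ {1, …, p} a fixed set of null indices, and t > 0 a fixed (deterministic) threshold. Assume that almost surely W_j ≠ 0 for all j ∈ H0, and that conditionally on the magnitudes (|W_1|, …, |W_p|) and on (W_j)_{j ∉ H0}, the signs (sign(W_j))_{j ∈ H0} are i.i.d. uniform on {−1, +1}. Then E[ #{j ∈ H0 : W_j ≥ t} / (1 + #{j ∈ H0 : W_j ≤ −t}) ] ≤ 1. -/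
open MeasureTheory Finset
open scoped symmDiff

/-- The **null sign-flip hypothesis** on knockoff statistics `W = (W_1, …, W_p)` with
null set `H0`: conditionally on the magnitudes `(|W_1|, …, |W_p|)` and on the values
`(W_j)_{j ∉ H0}`, the signs `(sign W_j)_{j ∈ H0}` are i.i.d. uniform on `{−1, +1}`.
Equivalently (and this is the form stated here), for every deterministic sign vector
`ε ∈ {−1,+1}^p` with `ε_j = 1` for all `j ∉ H0`, the flipped vector
`(ε_j W_j)_{j}` has the same joint distribution as `(W_j)_j`. -/
def NullSignFlip {Ω : Type*} [MeasurableSpace Ω] (P : Measure Ω) {p : ℕ}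
    (W : Fin p → Ω → ℝ) (H0 : Finset (Fin p)) : Prop :=
  ∀ ε : Fin p → ℝ, (∀ j, ε j = 1 ∨ ε j = -1) → (∀ j ∉ H0, ε j = 1) →
    Measure.map (fun ω (j : Fin p) => ε j * W j ω) P =
      Measure.map (fun ω (j : Fin p) => W j ω) P

-- Combinatorial core: binomial ratio bound
lemma binom_sum (n : ℕ) :
    ∑ k ∈ Finset.range (n+1), (n.choose k : ℝ) * (((n - k : ℕ) : ℝ) / (1 + (k : ℝ))) ≤ 2 ^ n := by
  have h1 : ∀ k ∈ Finset.range (n+1),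
      (n.choose k : ℝ) * (((n - k : ℕ) : ℝ) / (1 + (k : ℝ))) = (n.choose (k+1) : ℝ) := by
    intro k hk
    have h := Nat.choose_succ_right_eq n k
    have h2 : ((n.choose (k+1) : ℝ)) * ((k : ℝ) + 1) = (n.choose k : ℝ) * (((n - k : ℕ)) : ℝ) := by
      exact_mod_cast congrArg (Nat.cast : ℕ → ℝ) h
    have hk1 : (1 + (k:ℝ)) ≠ 0 := by positivity
    field_simp
    linarith
  rw [Finset.sum_congr rfl h1]
  have h3 : ∑ k ∈ Finset.range (n+1), n.choose (k+1) ≤ 2 ^ n := by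
    have h4 : (∑ k ∈ Finset.range (n+2), n.choose k)
        = (∑ k ∈ Finset.range (n+1), n.choose (k+1)) + n.choose 0 :=
      Finset.sum_range_succ' (fun i => n.choose i) (n+1)
    have h5 : ∑ k ∈ Finset.range (n+2), n.choose k = 2 ^ n := by
      rw [Finset.sum_range_succ, Nat.sum_range_choose, Nat.choose_succ_self, add_zero]
    omega
  calc ∑ k ∈ Finset.range (n+1), (n.choose (k+1) : ℝ)
      = ((∑ k ∈ Finset.range (n+1), n.choose (k+1) : ℕ) : ℝ) := by push_cast; ring
    _ ≤ ((2^n : ℕ) : ℝ) := by exact_mod_cast h3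
    _ = 2 ^ n := by push_cast; ring

lemma powerset_ratio {α : Type*} [DecidableEq α] (B : Finset α) :
    ∑ A ∈ B.powerset, (((B \ A).card : ℝ) / (1 + (A.card : ℝ))) ≤ 2 ^ B.card := by
  have h1 : ∑ A ∈ B.powerset, (((B \ A).card : ℝ) / (1 + (A.card : ℝ)))
      = ∑ A ∈ B.powerset, (fun k : ℕ => (((B.card - k : ℕ) : ℝ) / (1 + (k : ℝ)))) A.card := by
    refine Finset.sum_congr rfl fun A hA => ?_
    rw [Finset.mem_powerset] at hA
    rw [Finset.card_sdiff_of_subset hA]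
  have h2 := Finset.sum_powerset_apply_card
    (fun k : ℕ => (((B.card - k : ℕ) : ℝ) / (1 + (k : ℝ)))) (x := B)
  rw [h1, h2]
  simp only [nsmul_eq_mul]
  exact binom_sum B.card

lemma pointwise_bound {p : ℕ} (H0 : Finset (Fin p)) {t : ℝ} (ht : 0 < t)
    (w : Fin p → ℝ) (hw : ∀ j ∈ H0, w j ≠ 0) :
    ∑ S ∈ H0.powerset,
      ((H0.filter fun j => t ≤ (if j ∈ S then (-1:ℝ) else 1) * w j).card : ℝ) /
        (1 + ((H0.filter fun j => (if j ∈ S then (-1:ℝ) else 1) * w j ≤ -t).card : ℝ))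
      ≤ 2 ^ H0.card := by
  classical
  set v : Fin p → ℝ := fun j => |w j| with hv_def
  have hv : ∀ j ∈ H0, 0 < v j := fun j hj => abs_pos.mpr (hw j hj)
  set N : Finset (Fin p) := H0.filter (fun j => w j < 0) with hN_def
  have hNsub : N ⊆ H0 := Finset.filter_subset _ _
  -- sign normalization: summand for (w, S) equals summand for (v, S ∆ N)
  have hkey : ∀ S ∈ H0.powerset, ∀ j ∈ H0,
      (if j ∈ S ∆ N then (-1:ℝ) else 1) * v j = (if j ∈ S then (-1:ℝ) else 1) * w j := by
    intro S _ j hj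
    have hj' : j ∈ N ↔ w j < 0 := by simp [hN_def, hj]
    have hmem : j ∈ S ∆ N ↔ (j ∈ S ∧ j ∉ N ∨ j ∈ N ∧ j ∉ S) := Finset.mem_symmDiff
    rcases lt_trichotomy (w j) 0 with hneg | hzero | hpos
    · have hN : j ∈ N := hj'.mpr hneg
      have : v j = -w j := abs_of_neg hneg
      by_cases hS : j ∈ S
      · have : j ∉ S ∆ N := by simp [hmem, hS, hN]
        simp [this, hS, hv_def, abs_of_neg hneg]
      · have : j ∈ S ∆ N := by simp [hmem, hS, hN]
        simp [this, hS, hv_def, abs_of_neg hneg]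
    · exact absurd hzero (hw j hj)
    · have hN : j ∉ N := fun h => absurd (hj'.mp h) (not_lt.mpr hpos.le)
      by_cases hS : j ∈ S
      · have : j ∈ S ∆ N := by simp [hmem, hS, hN]
        simp [this, hS, hv_def, abs_of_pos hpos]
      · have : j ∉ S ∆ N := by simp [hmem, hS, hN]
        simp [this, hS, hv_def, abs_of_pos hpos]
  have hstep1 : ∑ S ∈ H0.powerset,
      (((H0.filter fun j => t ≤ (if j ∈ S then (-1:ℝ) else 1) * w j).card : ℝ) /
        (1 + ((H0.filter fun j => (if j ∈ S then (-1:ℝ) else 1) * w j ≤ -t).card : ℝ)))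
      = ∑ S ∈ H0.powerset,
      (((H0.filter fun j => t ≤ (if j ∈ S then (-1:ℝ) else 1) * v j).card : ℝ) /
        (1 + ((H0.filter fun j => (if j ∈ S then (-1:ℝ) else 1) * v j ≤ -t).card : ℝ))) := by
    refine Finset.sum_nbij' (fun S => S ∆ N) (fun S => S ∆ N) ?_ ?_ ?_ ?_ ?_
    · intro S hS
      rw [Finset.mem_powerset] at *
      intro x hx
      rcases Finset.mem_symmDiff.mp hx with ⟨h1, _⟩ | ⟨h1, _⟩
      exacts [hS h1, hNsub h1]
    · intro S hS
      rw [Finset.mem_powerset] at *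
      intro x hx
      rcases Finset.mem_symmDiff.mp hx with ⟨h1, _⟩ | ⟨h1, _⟩
      exacts [hS h1, hNsub h1]
    · intro S _; exact symmDiff_symmDiff_cancel_right N S
    · intro S _; exact symmDiff_symmDiff_cancel_right N S
    · intro S hS
      have e1 : (H0.filter fun j => t ≤ (if j ∈ S then (-1:ℝ) else 1) * w j)
          = (H0.filter fun j => t ≤ (if j ∈ S ∆ N then (-1:ℝ) else 1) * v j) := by
        refine Finset.filter_congr fun j hj => ?_
        rw [hkey S hS j hj]
      have e2 : (H0.filter fun j => (if j ∈ S then (-1:ℝ) else 1) * w j ≤ -t)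
          = (H0.filter fun j => (if j ∈ S ∆ N then (-1:ℝ) else 1) * v j ≤ -t) := by
        refine Finset.filter_congr fun j hj => ?_
        rw [hkey S hS j hj]
      rw [e1, e2]
  rw [hstep1]
  -- now only nonnegative v; filters simplify
  set B : Finset (Fin p) := H0.filter (fun j => t ≤ v j) with hB_def
  have hBsub : B ⊆ H0 := Finset.filter_subset _ _
  have eqA : ∀ S ∈ H0.powerset,
      (H0.filter fun j => t ≤ (if j ∈ S then (-1:ℝ) else 1) * v j) = B \ S := by
    intro S hS
    ext j
    simp only [Finset.mem_filter, Finset.mem_sdiff, hB_def]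
    by_cases hjS : j ∈ S
    · rw [if_pos hjS]
      constructor
      · rintro ⟨hjH, hle⟩
        exfalso
        have := hv j hjH
        nlinarith
      · rintro ⟨_, hnS⟩
        exact absurd hjS hnS
    · rw [if_neg hjS]
      constructor
      · rintro ⟨hjH, hle⟩
        exact ⟨⟨hjH, by linarith⟩, hjS⟩
      · rintro ⟨⟨hjH, hle⟩, _⟩
        exact ⟨hjH, by linarith⟩
  have eqB : ∀ S ∈ H0.powerset,
      (H0.filter fun j => (if j ∈ S then (-1:ℝ) else 1) * v j ≤ -t) = B ∩ S := by
    intro S hS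
    ext j
    simp only [Finset.mem_filter, Finset.mem_inter, hB_def]
    by_cases hjS : j ∈ S
    · rw [if_pos hjS]
      constructor
      · rintro ⟨hjH, hle⟩
        exact ⟨⟨hjH, by nlinarith⟩, hjS⟩
      · rintro ⟨⟨hjH, hle⟩, _⟩
        exact ⟨hjH, by nlinarith⟩
    · rw [if_neg hjS]
      constructor
      · rintro ⟨hjH, hle⟩
        exfalso
        have := hv j hjH
        nlinarith
      · rintro ⟨_, hS'⟩
        exact absurd hS' hjS
  have hstep2 : ∑ S ∈ H0.powerset,
      (((H0.filter fun j => t ≤ (if j ∈ S then (-1:ℝ) else 1) * v j).card : ℝ) /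
        (1 + ((H0.filter fun j => (if j ∈ S then (-1:ℝ) else 1) * v j ≤ -t).card : ℝ)))
      = ∑ S ∈ H0.powerset, (((B \ S).card : ℝ) / (1 + ((B ∩ S).card : ℝ))) := by
    refine Finset.sum_congr rfl fun S hS => ?_
    rw [eqA S hS, eqB S hS]
  rw [hstep2]
  -- bijection with B.powerset ×ˢ (H0 \ B).powerset
  have hstep3 : ∑ S ∈ H0.powerset, (((B \ S).card : ℝ) / (1 + ((B ∩ S).card : ℝ)))
      = ∑ P ∈ B.powerset ×ˢ (H0 \ B).powerset,
          (((B \ P.1).card : ℝ) / (1 + (P.1.card : ℝ))) := by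
    refine Finset.sum_nbij' (fun S => (B ∩ S, S \ B)) (fun P => P.1 ∪ P.2) ?_ ?_ ?_ ?_ ?_
    · intro S hS
      rw [Finset.mem_powerset] at hS
      rw [Finset.mem_product]
      constructor
      · exact Finset.mem_powerset.mpr Finset.inter_subset_left
      · exact Finset.mem_powerset.mpr (Finset.sdiff_subset_sdiff hS (le_refl B))
    · intro P hP
      rw [Finset.mem_product, Finset.mem_powerset, Finset.mem_powerset] at hP
      rw [Finset.mem_powerset]
      exact Finset.union_subset (hP.1.trans hBsub) (hP.2.trans Finset.sdiff_subset)
    · intro S hS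
      rw [Finset.mem_powerset] at hS
      ext x
      simp only [Finset.mem_union, Finset.mem_inter, Finset.mem_sdiff]
      tauto
    · intro P hP
      rw [Finset.mem_product, Finset.mem_powerset, Finset.mem_powerset] at hP
      have h1 : ∀ x ∈ P.1, x ∈ B := fun x hx => hP.1 hx
      have h2 : ∀ x ∈ P.2, x ∉ B := fun x hx => (Finset.mem_sdiff.mp (hP.2 hx)).2
      have e1 : B ∩ (P.1 ∪ P.2) = P.1 := by
        ext x
        simp only [Finset.mem_inter, Finset.mem_union]
        constructor
        · rintro ⟨hxB, hx12⟩
          rcases hx12 with h | h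
          · exact h
          · exact absurd hxB (h2 x h)
        · intro hx; exact ⟨h1 x hx, Or.inl hx⟩
      have e2 : (P.1 ∪ P.2) \ B = P.2 := by
        ext x
        simp only [Finset.mem_sdiff, Finset.mem_union]
        constructor
        · rintro ⟨h | h, hxB⟩
          · exact absurd (h1 x h) hxB
          · exact h
        · intro hx; exact ⟨Or.inr hx, h2 x hx⟩
      exact Prod.ext e1 e2
    · intro S hS
      simp only
      rw [Finset.sdiff_inter_self_left]
  rw [hstep3, Finset.sum_product]
  have hstep4 : ∑ A ∈ B.powerset, ∑ T ∈ (H0 \ B).powerset,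
        (((B \ A).card : ℝ) / (1 + (A.card : ℝ)))
      = (2 ^ (H0 \ B).card : ℝ) * ∑ A ∈ B.powerset, (((B \ A).card : ℝ) / (1 + (A.card : ℝ))) := by
    rw [Finset.mul_sum]
    refine Finset.sum_congr rfl fun A _ => ?_
    rw [Finset.sum_const, Finset.card_powerset, nsmul_eq_mul]
    push_cast
    ring
  rw [hstep4]
  have hle := powerset_ratio B
  have hpos : (0:ℝ) ≤ (2 ^ (H0 \ B).card : ℝ) := by positivity
  calc (2 ^ (H0 \ B).card : ℝ) * ∑ A ∈ B.powerset, (((B \ A).card : ℝ) / (1 + (A.card : ℝ)))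
      ≤ (2 ^ (H0 \ B).card : ℝ) * 2 ^ B.card := by
        exact mul_le_mul_of_nonneg_left hle hpos
    _ = 2 ^ H0.card := by
        rw [← pow_add]
        congr 1
        rw [Finset.card_sdiff_add_card_eq_card hBsub]

/-- The ratio statistic as a function of the vector `w`. -/
noncomputable def knockoffRatio {p : ℕ} (H0 : Finset (Fin p)) (t : ℝ) (w : Fin p → ℝ) : ℝ :=
  ((H0.filter fun j => t ≤ w j).card : ℝ) /
    (1 + ((H0.filter fun j => w j ≤ -t).card : ℝ))

lemma knockoffRatio_measurable {p : ℕ} (H0 : Finset (Fin p)) (t : ℝ) :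
    Measurable (knockoffRatio H0 t) := by
  have hnum : Measurable (fun w : Fin p → ℝ => ((H0.filter fun j => t ≤ w j).card : ℝ)) := by
    have h : (fun w : Fin p → ℝ => ((H0.filter fun j => t ≤ w j).card : ℝ))
        = fun w => ∑ j ∈ H0, if t ≤ w j then (1:ℝ) else 0 := by
      funext w
      rw [Finset.card_filter]
      push_cast
      simp
    rw [h]
    exact Finset.measurable_sum _ fun j _ => Measurable.ite
      (measurableSet_le measurable_const (measurable_pi_apply j)) measurable_const
      measurable_const
  have hden : Measurable (fun w : Fin p → ℝ => ((H0.filter fun j => w j ≤ -t).card : ℝ)) := by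
    have h : (fun w : Fin p → ℝ => ((H0.filter fun j => w j ≤ -t).card : ℝ))
        = fun w => ∑ j ∈ H0, if w j ≤ -t then (1:ℝ) else 0 := by
      funext w
      rw [Finset.card_filter]
      push_cast
      simp
    rw [h]
    exact Finset.measurable_sum _ fun j _ => Measurable.ite
      (measurableSet_le (measurable_pi_apply j) measurable_const) measurable_const
      measurable_const
  exact hnum.div (measurable_const.add hden)

lemma knockoffRatio_bound {p : ℕ} (H0 : Finset (Fin p)) (t : ℝ) (w : Fin p → ℝ) :
    ‖knockoffRatio H0 t w‖ ≤ (H0.card : ℝ) := by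
  have hdq : (0:ℝ) ≤ ((H0.filter fun j => w j ≤ -t).card : ℝ) := by positivity
  have h0 : (0:ℝ) ≤ knockoffRatio H0 t w := by
    apply div_nonneg (by positivity) (by positivity)
  rw [Real.norm_eq_abs, abs_of_nonneg h0]
  calc knockoffRatio H0 t w
      ≤ ((H0.filter fun j => t ≤ w j).card : ℝ) := div_le_self (by positivity) (by linarith)
    _ ≤ (H0.card : ℝ) := by exact_mod_cast Finset.card_filter_le _ _

/-- **Fixed-threshold expectation bound on null knockoff statistics.**
Let `W_1, …, W_p` be real random variables, `H0 ⊆ {1, …, p}` a fixed set of null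
indices, and `t > 0` a fixed (deterministic) threshold.  Assume that almost surely
`W_j ≠ 0` for all `j ∈ H0`, and that conditionally on the magnitudes
`(|W_1|, …, |W_p|)` and on `(W_j)_{j ∉ H0}`, the signs `(sign W_j)_{j ∈ H0}` are
i.i.d. uniform on `{−1, +1}` (formalized by the sign-flip property `NullSignFlip`).
Then `E[ #{j ∈ H0 : W_j ≥ t} / (1 + #{j ∈ H0 : W_j ≤ −t}) ] ≤ 1`. -/
theorem null_ratio_expectation_le_one {Ω : Type*} [MeasurableSpace Ω]
    (P : Measure Ω) [IsProbabilityMeasure P] {p : ℕ}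
    (W : Fin p → Ω → ℝ) (hmeas : ∀ j, Measurable (W j))
    (H0 : Finset (Fin p)) (t : ℝ) (ht : 0 < t)
    (hnz : ∀ᵐ ω ∂P, ∀ j ∈ H0, W j ω ≠ 0)
    (hflip : NullSignFlip P W H0) :
    ∫ ω, ((H0.filter fun j => t ≤ W j ω).card : ℝ) /
        (1 + ((H0.filter fun j => W j ω ≤ -t).card : ℝ)) ∂P ≤ 1 := by
  classical
  have hfmeas : Measurable (knockoffRatio H0 t) := knockoffRatio_measurable H0 t
  have hW : Measurable (fun ω (j : Fin p) => W j ω) := measurable_pi_lambda _ hmeas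
  have hεW : ∀ S : Finset (Fin p),
      Measurable (fun ω (j : Fin p) => (if j ∈ S then (-1:ℝ) else 1) * W j ω) :=
    fun S => measurable_pi_lambda _ fun j => measurable_const.mul (hmeas j)
  have hmap : ∀ S ∈ H0.powerset,
      Measure.map (fun ω (j : Fin p) => (if j ∈ S then (-1:ℝ) else 1) * W j ω) P
        = Measure.map (fun ω (j : Fin p) => W j ω) P := by
    intro S hS
    refine hflip _ (fun j => by by_cases h : j ∈ S <;> simp [h]) (fun j hj => ?_)
    rw [if_neg (fun hjS => hj (Finset.mem_powerset.mp hS hjS))]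
  have hint_eq : ∀ S ∈ H0.powerset,
      ∫ ω, knockoffRatio H0 t (fun j => (if j ∈ S then (-1:ℝ) else 1) * W j ω) ∂P
        = ∫ ω, knockoffRatio H0 t (fun j => W j ω) ∂P := by
    intro S hS
    rw [← integral_map (hεW S).aemeasurable hfmeas.aestronglyMeasurable, hmap S hS,
      integral_map hW.aemeasurable hfmeas.aestronglyMeasurable]
  have hint : ∀ S : Finset (Fin p),
      Integrable (fun ω => knockoffRatio H0 t
        (fun j => (if j ∈ S then (-1:ℝ) else 1) * W j ω)) P := by
    intro S
    refine Integrable.mono' (integrable_const (H0.card : ℝ))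
      ((hfmeas.comp (hεW S)).aestronglyMeasurable) ?_
    filter_upwards with ω using knockoffRatio_bound H0 t _
  have hkey : (2 ^ H0.card : ℝ) * ∫ ω, knockoffRatio H0 t (fun j => W j ω) ∂P
      ≤ 2 ^ H0.card := by
    have hcardpow : ((H0.powerset.card : ℕ) : ℝ) = 2 ^ H0.card := by
      rw [Finset.card_powerset]; push_cast; ring
    have e1 : (2 ^ H0.card : ℝ) * ∫ ω, knockoffRatio H0 t (fun j => W j ω) ∂P
        = ∑ S ∈ H0.powerset, ∫ ω, knockoffRatio H0 t
            (fun j => (if j ∈ S then (-1:ℝ) else 1) * W j ω) ∂P := by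
      rw [Finset.sum_congr rfl hint_eq, Finset.sum_const, nsmul_eq_mul, hcardpow]
    have e2 : ∑ S ∈ H0.powerset, ∫ ω, knockoffRatio H0 t
          (fun j => (if j ∈ S then (-1:ℝ) else 1) * W j ω) ∂P
        = ∫ ω, ∑ S ∈ H0.powerset, knockoffRatio H0 t
            (fun j => (if j ∈ S then (-1:ℝ) else 1) * W j ω) ∂P :=
      (integral_finset_sum _ fun S _ => hint S).symm
    have e3 : ∫ ω, ∑ S ∈ H0.powerset, knockoffRatio H0 t
          (fun j => (if j ∈ S then (-1:ℝ) else 1) * W j ω) ∂P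
        ≤ ∫ _ω, (2 ^ H0.card : ℝ) ∂P := by
      refine integral_mono_ae (integrable_finset_sum _ fun S _ => hint S)
        (integrable_const _) ?_
      filter_upwards [hnz] with ω hω
      exact pointwise_bound H0 ht (fun j => W j ω) hω
    have e4 : ∫ _ω, (2 ^ H0.card : ℝ) ∂P = 2 ^ H0.card := by simp
    calc (2 ^ H0.card : ℝ) * ∫ ω, knockoffRatio H0 t (fun j => W j ω) ∂P
        = ∑ S ∈ H0.powerset, ∫ ω, knockoffRatio H0 t
            (fun j => (if j ∈ S then (-1:ℝ) else 1) * W j ω) ∂P := e1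
      _ = ∫ ω, ∑ S ∈ H0.powerset, knockoffRatio H0 t
            (fun j => (if j ∈ S then (-1:ℝ) else 1) * W j ω) ∂P := e2
      _ ≤ ∫ _ω, (2 ^ H0.card : ℝ) ∂P := e3
      _ = 2 ^ H0.card := e4
  have h2pos : (0:ℝ) < 2 ^ H0.card := by positivity
  have hfin : ∫ ω, knockoffRatio H0 t (fun j => W j ω) ∂P ≤ 1 := by
    by_contra hcon
    push_neg at hcon
    nlinarith
  exact hfin
end

section
/- Let Σ be a real symmetric positive definite p×p matrix and S a real symmetric positive semidefinite p×p matrix. Then 2S − S Σ⁻¹ S is positive semidefinite if and only if 2Σ − S is positive semidefinite. -/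
open Matrix

private lemma knockoff_quad {p : ℕ} (Sig S : Matrix (Fin p) (Fin p) ℝ)
    (x y : Fin p → ℝ) :
    star (Sum.elim x y) ⬝ᵥ (fromBlocks Sig S S ((2 : ℝ) • S)) *ᵥ Sum.elim x y
      = x ⬝ᵥ Sig *ᵥ x + x ⬝ᵥ S *ᵥ y + y ⬝ᵥ S *ᵥ x + 2 * (y ⬝ᵥ S *ᵥ y) := by
  simp [Function.star_sumElim, fromBlocks_mulVec, sumElim_dotProduct_sumElim,
    dotProduct_add, smul_mulVec, dotProduct_smul, star_trivial, smul_eq_mul]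
  ring

private lemma knockoff_blocks_iff {p : ℕ} (Sig S : Matrix (Fin p) (Fin p) ℝ)
    (hSig : Sig.PosDef) (hS : S.PosSemidef) :
    (fromBlocks Sig S S ((2 : ℝ) • S)).PosSemidef ↔ ((2 : ℝ) • Sig - S).PosSemidef := by
  constructor
  · intro h
    refine PosSemidef.of_dotProduct_mulVec_nonneg ?_ fun x => ?_
    · show ((2 : ℝ) • Sig - S)ᴴ = _
      rw [conjTranspose_sub, conjTranspose_smul, hSig.1.eq, hS.1.eq, star_trivial]
    · have hq := h.dotProduct_mulVec_nonneg (Sum.elim x ((-(1/2) : ℝ) • x))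
      rw [knockoff_quad] at hq
      simp only [mulVec_smul, dotProduct_smul, smul_dotProduct, smul_eq_mul] at hq
      have hgoal : star x ⬝ᵥ ((2 : ℝ) • Sig - S) *ᵥ x
          = 2 * (x ⬝ᵥ Sig *ᵥ x) - x ⬝ᵥ S *ᵥ x := by
        simp [sub_mulVec, smul_mulVec, dotProduct_sub, dotProduct_smul,
          star_trivial, smul_eq_mul]
      rw [hgoal]
      linarith
  · intro h
    refine PosSemidef.of_dotProduct_mulVec_nonneg ?_ fun v => ?_
    · rw [isHermitian_fromBlocks_iff]
      refine ⟨hSig.1, hS.1, hS.1, ?_⟩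
      show ((2 : ℝ) • S)ᴴ = _
      rw [conjTranspose_smul, hS.1.eq, star_trivial]
    · set x := v ∘ Sum.inl
      set y := v ∘ Sum.inr
      have hv : v = Sum.elim x y := (Sum.elim_comp_inl_inr v).symm
      rw [hv, knockoff_quad]
      have h1 := h.dotProduct_mulVec_nonneg x
      have h2 := hS.dotProduct_mulVec_nonneg (x + (2:ℝ) • y)
      have h1' : star x ⬝ᵥ ((2 : ℝ) • Sig - S) *ᵥ x
          = 2 * (x ⬝ᵥ Sig *ᵥ x) - x ⬝ᵥ S *ᵥ x := by
        simp [sub_mulVec, smul_mulVec, dotProduct_sub, dotProduct_smul,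
          star_trivial, smul_eq_mul]
      have h2' : star (x + (2:ℝ) • y) ⬝ᵥ S *ᵥ (x + (2:ℝ) • y)
          = x ⬝ᵥ S *ᵥ x + 2 * (x ⬝ᵥ S *ᵥ y) + 2 * (y ⬝ᵥ S *ᵥ x)
            + 4 * (y ⬝ᵥ S *ᵥ y) := by
        simp [mulVec_add, mulVec_smul, dotProduct_add, add_dotProduct,
          dotProduct_smul, smul_dotProduct, star_trivial, smul_eq_mul]
        ring
      rw [h1'] at h1
      rw [h2'] at h2
      linarith

/-- **Admissibility of the knockoff conditional covariance.**
Let `Σ` be a real symmetric positive definite `p×p` matrix and `S` a real symmetric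
positive semidefinite `p×p` matrix.  Then `2S − S Σ⁻¹ S` is positive semidefinite
if and only if `2Σ − S` is positive semidefinite. -/
theorem knockoff_condCov_posSemidef_iff {p : ℕ} (Sig S : Matrix (Fin p) (Fin p) ℝ)
    (hSig : Sig.PosDef) (hS : S.PosSemidef) :
    ((2 : ℝ) • S - S * Sig⁻¹ * S).PosSemidef ↔ ((2 : ℝ) • Sig - S).PosSemidef := by
  haveI := hSig.isUnit.invertible
  have hSH : Sᴴ = S := hS.1
  rw [show S * Sig⁻¹ * S = Sᴴ * Sig⁻¹ * S from by rw [hSH]]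
  rw [← Matrix.PosDef.fromBlocks₁₁ S ((2 : ℝ) • S) hSig]
  rw [hSH]
  exact knockoff_blocks_iff Sig S hSig hS
end

section
/- Let Σ be a real symmetric positive definite p×p matrix and S a real symmetric positive semidefinite p×p matrix, and let G be the 2p×2p block matrix G = [[Σ, Σ−S],[Σ−S, Σ]]. Then G is positive semidefinite if and only if 2Σ − S is positive semidefinite. -/
open Matrix

/-- A nonnegative real multiple of a positive semidefinite matrix is positive semidefinite. -/
lemma posSemidef_smul_nonneg {n : Type*} [Fintype n] {A : Matrix n n ℝ} (hA : A.PosSemidef)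
    {c : ℝ} (hc : 0 ≤ c) : (c • A).PosSemidef := by
  refine Matrix.PosSemidef.of_dotProduct_mulVec_nonneg ?_ fun x => ?_
  · unfold Matrix.IsHermitian
    rw [conjTranspose_smul, hA.1.eq]
    simp
  · rw [smul_mulVec, dotProduct_smul, smul_eq_mul]
    exact mul_nonneg hc (hA.dotProduct_mulVec_nonneg x)

/-- **Positive semidefiniteness of the joint knockoff covariance matrix.**
Let `Σ` be a real symmetric positive definite `p×p` matrix and `S` a real symmetric
positive semidefinite `p×p` matrix, and let `G` be the `2p×2p` block matrix
`G = [[Σ, Σ−S],[Σ−S, Σ]]`.  Then `G` is positive semidefinite if and only if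
`2Σ − S` is positive semidefinite. -/
theorem knockoff_jointCov_posSemidef_iff {p : ℕ} (Sig S : Matrix (Fin p) (Fin p) ℝ)
    (hSig : Sig.PosDef) (hS : S.PosSemidef) :
    (Matrix.fromBlocks Sig (Sig - S) (Sig - S) Sig).PosSemidef ↔
      ((2 : ℝ) • Sig - S).PosSemidef := by
  constructor
  · intro hG
    refine Matrix.PosSemidef.of_dotProduct_mulVec_nonneg ?_ fun x => ?_
    · unfold Matrix.IsHermitian
      rw [conjTranspose_sub, conjTranspose_smul, hSig.1.eq, hS.1.eq]
      simp
    · have h := hG.dotProduct_mulVec_nonneg (Sum.elim x x)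
      have hx : star (Sum.elim x x) = Sum.elim (star x) (star x) := by
        ext i; cases i <;> simp
      rw [hx, fromBlocks_mulVec, sumElim_dotProduct_sumElim] at h
      simp only [Sum.elim_comp_inl, Sum.elim_comp_inr] at h
      have hv : Sig *ᵥ x + (Sig - S) *ᵥ x = ((2 : ℝ) • Sig - S) *ᵥ x := by
        rw [sub_mulVec, sub_mulVec, smul_mulVec, two_smul]
        abel
      rw [hv, add_comm ((Sig - S) *ᵥ x) (Sig *ᵥ x), hv] at h
      linarith
  · intro h2
    -- congruence identity: G = (1/2) • (M * D * Mᴴ)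
    set A := (2 : ℝ) • Sig - S with hA
    set M : Matrix (Fin p ⊕ Fin p) (Fin p ⊕ Fin p) ℝ := fromBlocks 1 1 1 (-1) with hM
    set D : Matrix (Fin p ⊕ Fin p) (Fin p ⊕ Fin p) ℝ := fromBlocks A 0 0 S with hD
    have hDpsd : D.PosSemidef := by
      refine Matrix.PosSemidef.of_dotProduct_mulVec_nonneg ?_ fun v => ?_
      · rw [hD]
        unfold Matrix.IsHermitian
        rw [fromBlocks_conjTranspose, h2.1.eq, hS.1.eq]
        simp
      · rw [← Sum.elim_comp_inl_inr v]
        have hx : star (Sum.elim (v ∘ Sum.inl) (v ∘ Sum.inr)) =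
            Sum.elim (star (v ∘ Sum.inl)) (star (v ∘ Sum.inr)) := by
          ext i; cases i <;> simp
        rw [hx, hD, fromBlocks_mulVec, sumElim_dotProduct_sumElim]
        simp only [zero_mulVec, add_zero, zero_add]
        exact add_nonneg (h2.dotProduct_mulVec_nonneg _) (hS.dotProduct_mulVec_nonneg _)
    have hkey : Matrix.fromBlocks Sig (Sig - S) (Sig - S) Sig
        = (1 / 2 : ℝ) • (M * D * Mᴴ) := by
      rw [hM, hD, fromBlocks_conjTranspose]
      simp only [fromBlocks_multiply, fromBlocks_smul]
      rw [hA]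
      ext i j
      cases i <;> cases j <;>
        simp [Matrix.mul_apply, Matrix.smul_apply, Matrix.sub_apply, Matrix.add_apply] <;> ring
    rw [hkey]
    exact posSemidef_smul_nonneg (hDpsd.mul_mul_conjTranspose_same M) (by norm_num)
end

section
/- Let Σ be a real symmetric positive definite p×p matrix with smallest eigenvalue λ_min(Σ), and let s be a real number with 0 ≤ s ≤ 2 λ_min(Σ). Then 2Σ − sI is positive semidefinite, and consequently the joint knockoff covariance matrix G = [[Σ, Σ−sI],[Σ−sI, Σ]] is positive semidefinite. -/
open Matrix

/-- **Validity of the equi-correlated knockoff construction.**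
Let `Σ` be a real symmetric positive definite `p×p` matrix with smallest eigenvalue
`λ_min(Σ)`, and let `s` be a real number with `0 ≤ s ≤ 2 λ_min(Σ)` (equivalently,
`s ≤ 2 λ` for every eigenvalue `λ` of `Σ`).  Then `2Σ − sI` is positive semidefinite,
and consequently the joint knockoff covariance matrix
`G = [[Σ, Σ−sI],[Σ−sI, Σ]]` is positive semidefinite. -/
theorem equicorrelated_knockoff_posSemidef {p : ℕ} (Sig : Matrix (Fin p) (Fin p) ℝ)
    (hSig : Sig.PosDef) (s : ℝ) (hs0 : 0 ≤ s)
    (hs : ∀ i, s ≤ 2 * hSig.1.eigenvalues i) :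
    ((2 : ℝ) • Sig - s • (1 : Matrix (Fin p) (Fin p) ℝ)).PosSemidef ∧
      (Matrix.fromBlocks Sig (Sig - s • (1 : Matrix (Fin p) (Fin p) ℝ))
        (Sig - s • (1 : Matrix (Fin p) (Fin p) ℝ)) Sig).PosSemidef := by
  have hH := hSig.1
  set U : Matrix (Fin p) (Fin p) ℝ := (hH.eigenvectorUnitary : Matrix (Fin p) (Fin p) ℝ)
    with hUdef
  have hUU : U * star U = 1 := (Matrix.mem_unitaryGroup_iff).mp hH.eigenvectorUnitary.2
  have key : (2 : ℝ) • Sig - s • (1 : Matrix (Fin p) (Fin p) ℝ)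
      = U * Matrix.diagonal (fun i => 2 * hH.eigenvalues i - s) * star U := by
    have hspec := hH.spectral_theorem
    simp only [Unitary.conjStarAlgAut_apply] at hspec
    have hd : Matrix.diagonal (fun i => 2 * hH.eigenvalues i - s)
        = (2:ℝ) • Matrix.diagonal (RCLike.ofReal ∘ hH.eigenvalues) - s • 1 := by
      ext i j
      rcases eq_or_ne i j with h | h
      · subst h
        simp [Matrix.one_apply, two_mul]
      · simp [Matrix.diagonal_apply_ne _ h, Matrix.one_apply, h]
    rw [hd, Matrix.mul_sub, Matrix.sub_mul, Matrix.mul_smul, Matrix.smul_mul,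
      Matrix.mul_smul, Matrix.smul_mul, Matrix.mul_one, hUU, hUdef, ← hspec]
  have part1 : ((2 : ℝ) • Sig - s • (1 : Matrix (Fin p) (Fin p) ℝ)).PosSemidef := by
    rw [key]
    have hd : Matrix.PosSemidef (Matrix.diagonal (fun i => 2 * hH.eigenvalues i - s)) :=
      Matrix.posSemidef_diagonal_iff.mpr fun i => by linarith [hs i]
    simpa [Matrix.star_eq_conjTranspose] using hd.mul_mul_conjTranspose_same U
  refine ⟨part1, ?_⟩
  have h1 : (Sig - s • (1 : Matrix (Fin p) (Fin p) ℝ)).IsHermitian := by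
    refine hH.sub ?_
    unfold Matrix.IsHermitian
    simp
  refine Matrix.posSemidef_iff_dotProduct_mulVec.mpr ⟨?_, ?_⟩
  · rw [Matrix.isHermitian_fromBlocks_iff]
    exact ⟨hH, h1, by rw [h1.eq], hH⟩
  · intro z
    set x : Fin p → ℝ := z ∘ Sum.inl with hx
    set y : Fin p → ℝ := z ∘ Sum.inr with hy
    have hz : z = Sum.elim x y := by funext i; cases i <;> rfl
    have hq : dotProduct (star z)
        ((Matrix.fromBlocks Sig (Sig - s • 1) (Sig - s • 1) Sig) *ᵥ z)
        = (1/2) * dotProduct (x + y)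
            (((2 : ℝ) • Sig - s • (1 : Matrix (Fin p) (Fin p) ℝ)) *ᵥ (x + y))
          + (s/2) * dotProduct (x - y) (x - y) := by
      rw [hz]
      simp only [Matrix.fromBlocks_mulVec, star_trivial, sumElim_dotProduct_sumElim,
        Matrix.sub_mulVec, Matrix.smul_mulVec, Matrix.one_mulVec,
        Matrix.mulVec_add, dotProduct_add, add_dotProduct,
        dotProduct_sub, sub_dotProduct, dotProduct_smul,
        smul_dotProduct, smul_eq_mul, Sum.elim_comp_inl, Sum.elim_comp_inr]
      rw [dotProduct_comm y x]
      ring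
    rw [hq]
    have h1 := part1.dotProduct_mulVec_nonneg (x + y)
    have h2 : (0:ℝ) ≤ dotProduct (x - y) (x - y) := by
      simpa using dotProduct_star_self_nonneg (x - y)
    simp only [star_trivial] at h1
    positivity
end

section
/- Let Σ be a real symmetric p×p matrix, S a real diagonal p×p matrix, and G the 2p×2p block matrix G = [[Σ, Σ−S],[Σ−S, Σ]]. For any subset A ⊆ {1, …, p}, let P_A be the 2p×2p permutation matrix of the permutation that swaps index j with index p + j for every j ∈ A and fixes all other indices. Then P_Aᵀ G P_A = G. -/
open Matrix

/-- The coordinate-swap map on `Fin p ⊕ Fin p` exchanging `j` (an "original"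
coordinate, `Sum.inl j`) with `p + j` (its "knockoff" counterpart, `Sum.inr j`)
for every `j ∈ A`, and fixing all other indices. -/
def knockoffSwapFun {p : ℕ} (A : Finset (Fin p)) : Fin p ⊕ Fin p → Fin p ⊕ Fin p
  | .inl j => if j ∈ A then .inr j else .inl j
  | .inr j => if j ∈ A then .inl j else .inr j

theorem knockoffSwapFun_involutive {p : ℕ} (A : Finset (Fin p)) :
    Function.Involutive (knockoffSwapFun A) := by
  rintro (j | j) <;> by_cases h : j ∈ A <;> simp [knockoffSwapFun, h]

/-- The permutation of `{1,…,2p}` (modelled as `Fin p ⊕ Fin p`) swapping index `j`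
with index `p + j` for every `j ∈ A` and fixing all other indices. -/
def knockoffSwapPerm {p : ℕ} (A : Finset (Fin p)) : Equiv.Perm (Fin p ⊕ Fin p) :=
  (knockoffSwapFun_involutive A).toPerm

/-- The transpose of a permutation matrix is the permutation matrix of the inverse. -/
lemma permMatrix_transpose {n : Type*} [DecidableEq n] (σ : Equiv.Perm n) :
    ((σ.permMatrix ℝ)ᵀ : Matrix n n ℝ) = (σ⁻¹).permMatrix ℝ := by
  ext i j
  simp [Equiv.Perm.permMatrix, PEquiv.toMatrix_apply, Equiv.toPEquiv_apply, transpose_apply,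
    Option.mem_def, one_apply]
  by_cases h : σ j = i
  · subst h; simp
  · rw [if_neg h, if_neg (fun h2 => h (by subst h2; simp))]

/-- **Swap-invariance of the joint knockoff covariance matrix.**
Let `Σ` be a real symmetric `p×p` matrix, `S` a real diagonal `p×p` matrix, and `G`
the `2p×2p` block matrix `G = [[Σ, Σ−S],[Σ−S, Σ]]`.  For any subset
`A ⊆ {1,…,p}`, let `P_A` be the `2p×2p` permutation matrix of the permutation that
swaps index `j` with index `p+j` for every `j ∈ A` and fixes all other indices.
Then `P_Aᵀ G P_A = G`. -/
theorem knockoff_jointCov_swap_invariant {p : ℕ} (Sig S : Matrix (Fin p) (Fin p) ℝ)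
    (hSig : Sig.IsSymm) (hS : S.IsDiag) (A : Finset (Fin p)) :
    ((knockoffSwapPerm A).permMatrix ℝ)ᵀ *
        Matrix.fromBlocks Sig (Sig - S) (Sig - S) Sig *
        ((knockoffSwapPerm A).permMatrix ℝ) =
      Matrix.fromBlocks Sig (Sig - S) (Sig - S) Sig := by
  rw [permMatrix_transpose, Equiv.Perm.permMatrix, Equiv.Perm.permMatrix,
    PEquiv.toMatrix_toPEquiv_mul, PEquiv.mul_toMatrix_toPEquiv]
  have hinv : (knockoffSwapPerm A)⁻¹ = knockoffSwapPerm A := rfl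
  rw [hinv]
  ext i j
  rcases i with a | a <;> rcases j with b | b <;>
    by_cases ha : a ∈ A <;> by_cases hb : b ∈ A <;>
    simp [knockoffSwapPerm, Function.Involutive.toPerm, knockoffSwapFun, ha, hb, Matrix.sub_apply]
  all_goals simp [hS (show a ≠ b by rintro rfl; simp_all)]
end

section
/- Let Σ be a real symmetric invertible p×p matrix, S a real symmetric p×p matrix, and L a real p×p matrix with L Lᵀ = 2S − S Σ⁻¹ S. Let T be the 2p×2p block matrix T = [[I, 0],[I − SΣ⁻¹, L]] and G₀ = [[Σ, 0],[0, I]]. Then T G₀ Tᵀ = [[Σ, Σ−S],[Σ−S, Σ]]. -/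
open Matrix

/-- **Covariance correctness of the Gaussian knockoff sampling map.**
Let `Σ` be a real symmetric invertible `p×p` matrix, `S` a real symmetric `p×p`
matrix, and `L` a real `p×p` matrix with `L Lᵀ = 2S − S Σ⁻¹ S`.  Let `T` be the
`2p×2p` block matrix `T = [[I, 0],[I − SΣ⁻¹, L]]` and `G₀ = [[Σ, 0],[0, I]]`.
Then `T G₀ Tᵀ = [[Σ, Σ−S],[Σ−S, Σ]]`. -/
theorem knockoff_sampling_covariance {p : ℕ} (Sig S L : Matrix (Fin p) (Fin p) ℝ)
    (hSig : Sig.IsSymm) (hSigInv : IsUnit Sig.det) (hS : S.IsSymm)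
    (hL : L * Lᵀ = (2 : ℝ) • S - S * Sig⁻¹ * S) :
    Matrix.fromBlocks 1 0 (1 - S * Sig⁻¹) L *
        Matrix.fromBlocks Sig 0 0 1 *
        (Matrix.fromBlocks 1 0 (1 - S * Sig⁻¹) L)ᵀ =
      Matrix.fromBlocks Sig (Sig - S) (Sig - S) Sig := by
  have hmul : Sig * Sig⁻¹ = 1 := Matrix.mul_nonsing_inv _ hSigInv
  have hmul' : Sig⁻¹ * Sig = 1 := Matrix.nonsing_inv_mul _ hSigInv
  have hinvT : (Sig⁻¹)ᵀ = Sig⁻¹ := by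
    rw [Matrix.transpose_nonsing_inv, hSig.eq]
  have h1 : (1 - S * Sig⁻¹)ᵀ = 1 - Sig⁻¹ * S := by
    rw [transpose_sub, transpose_one, transpose_mul, hinvT, hS.eq]
  have hTR : Sig * (1 - Sig⁻¹ * S) = Sig - S := by
    rw [Matrix.mul_sub, Matrix.mul_one, ← Matrix.mul_assoc, hmul, Matrix.one_mul]
  have hBL : (1 - S * Sig⁻¹) * Sig = Sig - S := by
    rw [Matrix.sub_mul, Matrix.one_mul, Matrix.mul_assoc, hmul', Matrix.mul_one]
  have hBR : (1 - S * Sig⁻¹) * Sig * (1 - Sig⁻¹ * S) + L * Lᵀ = Sig := by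
    rw [hBL, hL, Matrix.sub_mul, Matrix.mul_sub, Matrix.mul_sub, Matrix.mul_one,
      Matrix.mul_one, ← Matrix.mul_assoc Sig, hmul, Matrix.one_mul,
      ← Matrix.mul_assoc S, two_smul]
    abel
  rw [Matrix.fromBlocks_transpose, Matrix.fromBlocks_multiply, Matrix.fromBlocks_multiply, h1]
  have hBR' : (Sig - S) * (1 - Sig⁻¹ * S) + L * Lᵀ = Sig := by rw [← hBL]; exact hBR
  simp [hTR, hBL, hBR']
end

section
/- Let p be a positive integer, μ ∈ ℝ^p, Σ a real symmetric positive definite p×p matrix, and S a real diagonal positive semidefinite p×p matrix with 2Σ − S positive semidefinite, and let G = [[Σ, Σ−S],[Σ−S, Σ]], which is positive semidefinite. Let ν be the multivariate Gaussian measure on ℝ^{2p} with mean vector (μ, μ) and covariance G. For any subset A ⊆ {1, …, p}, let σ_A : ℝ^{2p} → ℝ^{2p} be the linear map permuting coordinates by swapping coordinate j with coordinate p + j for every j ∈ A. Then the pushforward of ν under σ_A equals ν. -/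
open MeasureTheory Matrix

/-- `ν` is the multivariate Gaussian measure on `ℝ^d` (modelled as `d → ℝ`) with mean
vector `m` and covariance matrix `G`, characterized (Cramér–Wold) by the requirement
that every linear functional `x ↦ ∑ i, a i * x i` pushes `ν` forward to the real
Gaussian with mean `⟪a, m⟫` and variance `aᵀ G a`. -/
def IsMultivariateGaussian {d : Type*} [Fintype d] (ν : Measure (d → ℝ))
    (m : d → ℝ) (G : Matrix d d ℝ) : Prop :=
  IsProbabilityMeasure ν ∧
    ∀ a : d → ℝ,
      Measure.map (fun x => ∑ i, a i * x i) ν =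
        ProbabilityTheory.gaussianReal (∑ i, a i * m i)
          (Real.toNNReal (a ⬝ᵥ G.mulVec a))

noncomputable section

namespace GKSI

open Set Submodule Filter

set_option maxHeartbeats 1000000
set_option synthInstance.maxHeartbeats 400000
set_option linter.unusedSectionVars false
set_option linter.unusedVariables false

variable {d : Type*} [Fintype d] [DecidableEq d]

/-- Product Fourier character on the torus `(d → AddCircle L)`. -/
def mfourier (L : ℝ) (k : d → ℤ) : C(d → AddCircle L, ℂ) :=
  ∏ i, (fourier (k i)).comp ⟨fun x => x i, continuous_apply i⟩

lemma mfourier_apply (L : ℝ) (k : d → ℤ) (x : d → AddCircle L) :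
    mfourier L k x = ∏ i, fourier (k i) (x i) := by
  simp [mfourier]

lemma mfourier_one (L : ℝ) : mfourier (d := d) L 0 = 1 := by
  ext x
  simp [mfourier_apply, fourier_zero]

lemma mfourier_mul (L : ℝ) (k j : d → ℤ) :
    mfourier L k * mfourier L j = mfourier L (k + j) := by
  ext x
  simp [mfourier_apply, ← Finset.prod_mul_distrib, ← fourier_add]

lemma mfourier_star (L : ℝ) (k : d → ℤ) :
    star (mfourier L k) = mfourier L (-k) := by
  ext x
  simp [mfourier_apply, fourier_neg]

/-- The star subalgebra generated by the product characters. -/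
def mfourierSubalgebra (L : ℝ) : StarSubalgebra ℂ C(d → AddCircle L, ℂ) where
  toSubalgebra := Algebra.adjoin ℂ (range (mfourier (d := d) L))
  star_mem' := by
    show Algebra.adjoin ℂ (range (mfourier (d := d) L)) ≤
      star (Algebra.adjoin ℂ (range (mfourier (d := d) L)))
    refine Algebra.adjoin_le ?_
    rintro - ⟨k, rfl⟩
    exact Algebra.subset_adjoin ⟨-k, (mfourier_star L k).symm ▸ rfl⟩

lemma mfourierSubalgebra_coe (L : ℝ) :
    Subalgebra.toSubmodule (mfourierSubalgebra (d := d) L).toSubalgebra =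
      span ℂ (range (mfourier (d := d) L)) := by
  show Subalgebra.toSubmodule (Algebra.adjoin ℂ (range (mfourier (d := d) L))) = _
  apply Algebra.adjoin_eq_span_of_subset
  refine Subset.trans ?_ Submodule.subset_span
  intro x hx
  refine Submonoid.closure_induction (fun _ => id) ⟨0, (mfourier_one L)⟩ ?_ hx
  rintro - - - - ⟨m, rfl⟩ ⟨n, rfl⟩
  exact ⟨m + n, (mfourier_mul L m n).symm⟩

lemma mfourierSubalgebra_separatesPoints (L : ℝ) [hL : Fact (0 < L)] :
    (mfourierSubalgebra (d := d) L).SeparatesPoints := by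
  intro x y hxy
  obtain ⟨i, hi⟩ := Function.ne_iff.mp hxy
  refine ⟨_, ⟨mfourier L (Pi.single i 1), Algebra.subset_adjoin ⟨Pi.single i 1, rfl⟩, rfl⟩, ?_⟩
  have key : ∀ z : d → AddCircle L, mfourier L (Pi.single i 1) z = fourier 1 (z i) := by
    intro z
    rw [mfourier_apply]
    rw [Finset.prod_eq_single i (fun j _ hj => by rw [Pi.single_eq_of_ne hj]; exact fourier_zero)
      (fun h => absurd (Finset.mem_univ i) h), Pi.single_eq_same]
  dsimp only
  rw [key, key, fourier_one, fourier_one]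
  contrapose! hi
  replace hi := Circle.ext hi
  exact AddCircle.injective_toCircle hL.out.ne' hi

lemma span_mfourier_closure_eq_top (L : ℝ) [Fact (0 < L)] :
    (span ℂ (range (mfourier (d := d) L))).topologicalClosure = ⊤ := by
  rw [← mfourierSubalgebra_coe]
  exact congr_arg (Subalgebra.toSubmodule <| StarSubalgebra.toSubalgebra ·)
    (ContinuousMap.starSubalgebra_topologicalClosure_eq_top_of_separatesPoints _
      (mfourierSubalgebra_separatesPoints L))


lemma integrable_continuousMap (L : ℝ) [Fact (0 < L)] (μ : Measure (d → AddCircle L))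
    [IsFiniteMeasure μ] (f : C(d → AddCircle L, ℂ)) : Integrable f μ :=
  f.continuous.integrable_of_hasCompactSupport (HasCompactSupport.of_compactSpace f)

lemma torus_ext (L : ℝ) [Fact (0 < L)] (μ₁ μ₂ : Measure (d → AddCircle L))
    [IsProbabilityMeasure μ₁] [IsProbabilityMeasure μ₂]
    (h : ∀ k : d → ℤ, ∫ x, mfourier L k x ∂μ₁ = ∫ x, mfourier L k x ∂μ₂) :
    μ₁ = μ₂ := by
  have key : ∀ f : C(d → AddCircle L, ℂ), ∫ x, f x ∂μ₁ = ∫ x, f x ∂μ₂ := by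
    intro f
    have hspan : ∀ g ∈ span ℂ (range (mfourier (d := d) L)), ∫ x, g x ∂μ₁ = ∫ x, g x ∂μ₂ := by
      intro g hg
      induction hg using Submodule.span_induction with
      | mem g hg => obtain ⟨k, rfl⟩ := hg; exact h k
      | zero => simp
      | add g₁ g₂ _ _ h1 h2 =>
        simp only [ContinuousMap.add_apply]
        rw [integral_add (integrable_continuousMap L μ₁ g₁) (integrable_continuousMap L μ₁ g₂),
          integral_add (integrable_continuousMap L μ₂ g₁) (integrable_continuousMap L μ₂ g₂),
          h1, h2]
      | smul c g _ hg =>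
        simp only [ContinuousMap.smul_apply]
        rw [integral_smul, integral_smul, hg]
    have hf : f ∈ closure ((span ℂ (range (mfourier (d := d) L)) : Submodule ℂ _) : Set _) := by
      have := span_mfourier_closure_eq_top (d := d) L
      rw [← Submodule.topologicalClosure_coe, this]
      trivial
    refine eq_of_forall_dist_le fun ε hε => ?_
    obtain ⟨g, hgmem, hgd⟩ := Metric.mem_closure_iff.mp hf (ε/2) (by linarith)
    have hb : ∀ (μ : Measure (d → AddCircle L)) [IsProbabilityMeasure μ],
        ‖∫ x, f x ∂μ - ∫ x, g x ∂μ‖ ≤ ε/2 := by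
      intro μ _
      rw [← integral_sub (integrable_continuousMap L μ f) (integrable_continuousMap L μ g)]
      calc ‖∫ x, (f x - g x) ∂μ‖ ≤ ε/2 * (μ univ).toReal := by
            refine norm_integral_le_of_norm_le_const (Filter.Eventually.of_forall fun x => ?_)
            calc ‖f x - g x‖ = dist (f x) (g x) := by rw [dist_eq_norm]
            _ ≤ dist f g := ContinuousMap.dist_apply_le_dist x
            _ ≤ ε/2 := le_of_lt hgd
        _ = ε/2 := by simp
    calc dist (∫ x, f x ∂μ₁) (∫ x, f x ∂μ₂)
        ≤ ‖∫ x, f x ∂μ₁ - ∫ x, g x ∂μ₁‖ + ‖∫ x, g x ∂μ₂ - ∫ x, f x ∂μ₂‖ := by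
          rw [hspan g hgmem, dist_eq_norm]
          exact norm_sub_le_norm_sub_add_norm_sub _ _ _
      _ ≤ ε/2 + ε/2 := add_le_add (hb μ₁) (by rw [norm_sub_rev]; exact hb μ₂)
      _ = ε := by ring
  -- now real bounded continuous and lintegral
  refine ext_of_forall_lintegral_eq_of_IsFiniteMeasure fun f => ?_
  have hreal : ∫ x, (f x : ℝ) ∂μ₁ = ∫ x, (f x : ℝ) ∂μ₂ := by
    have hc : Continuous fun x => ((f x : ℝ) : ℂ) :=
      Complex.continuous_ofReal.comp (NNReal.continuous_coe.comp f.continuous)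
    have hkey := key ⟨fun x => ((f x : ℝ) : ℂ), hc⟩
    simp only [ContinuousMap.coe_mk] at hkey
    have hre := congrArg Complex.re hkey
    simp only [← RCLike.re_eq_complex_re] at hre
    have hint1 : Integrable (fun x => ((f x : ℝ) : ℂ)) μ₁ := integrable_continuousMap L μ₁ ⟨_, hc⟩
    have hint2 : Integrable (fun x => ((f x : ℝ) : ℂ)) μ₂ := integrable_continuousMap L μ₂ ⟨_, hc⟩
    rw [← integral_re hint1, ← integral_re hint2] at hre
    simpa using hre
  have hint : ∀ (μ : Measure (d → AddCircle L)) [IsProbabilityMeasure μ],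
      Integrable (fun x => (f x : ℝ)) μ := by
    intro μ _
    exact (NNReal.continuous_coe.comp f.continuous).integrable_of_hasCompactSupport
      (HasCompactSupport.of_compactSpace _)
  rw [lintegral_coe_eq_integral _ (hint μ₁), lintegral_coe_eq_integral _ (hint μ₂), hreal]


lemma mfourier_comp_coe (L : ℝ) (hL : L ≠ 0) (k : d → ℤ) (x : d → ℝ) :
    mfourier L k (fun i => (x i : AddCircle L)) =
      Complex.exp (Complex.I * ((∑ i, (2 * Real.pi * k i / L) * x i : ℝ) : ℂ)) := by
  rw [mfourier_apply]
  have h1 : ∀ i, fourier (k i) ((x i : ℝ) : AddCircle L) =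
      Complex.exp (2 * Real.pi * Complex.I * k i * x i / L) := fun i => fourier_coe_apply
  simp_rw [h1, ← Complex.exp_sum]
  congr 1
  push_cast
  rw [Finset.mul_sum]
  refine Finset.sum_congr rfl fun i _ => ?_
  have hL' : (L : ℂ) ≠ 0 := Complex.ofReal_ne_zero.mpr hL
  field_simp

/-- open cube of radius m -/
def cube (m : ℝ) : Set (d → ℝ) := {x | ∀ i, |x i| < m}

lemma isOpen_cube (m : ℝ) : IsOpen (cube (d := d) m) := by
  have : cube (d := d) m = ⋂ i, (fun x : d → ℝ => |x i|) ⁻¹' Iio m := by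
    ext x; simp [cube]
  rw [this]
  exact isOpen_iInter_of_finite fun i =>
    ((continuous_apply i).abs).isOpen_preimage _ isOpen_Iio

lemma cube_mono {m m' : ℝ} (h : m ≤ m') : cube (d := d) m ⊆ cube m' :=
  fun x hx i => lt_of_lt_of_le (hx i) h

lemma tendsto_tail (ν : Measure (d → ℝ)) [IsProbabilityMeasure ν] :
    Tendsto (fun m : ℕ => ν (cube (d := d) (m : ℝ))ᶜ) atTop (nhds 0) := by
  have hmono : Monotone fun m : ℕ => cube (d := d) (m : ℝ) := fun a b hab =>
    cube_mono (by exact_mod_cast hab)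
  have hunion : ⋃ m : ℕ, cube (d := d) (m : ℝ) = univ := by
    ext x
    simp only [mem_iUnion, mem_univ, iff_true]
    obtain ⟨m, hm⟩ := exists_nat_gt (∑ i, |x i|)
    exact ⟨m, fun i => lt_of_le_of_lt
      (Finset.single_le_sum (fun j _ => abs_nonneg (x j)) (Finset.mem_univ i)) hm⟩
  have h1 := tendsto_measure_iUnion_atTop (μ := ν) hmono
  rw [hunion, measure_univ] at h1
  have h2 : ∀ m : ℕ, ν (cube (d := d) (m : ℝ))ᶜ = 1 - ν (cube (d := d) (m : ℝ)) := fun m => by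
    rw [measure_compl (isOpen_cube _).measurableSet (measure_ne_top _ _), measure_univ]
  simp_rw [h2]
  simpa using ENNReal.Tendsto.sub (tendsto_const_nhds (x := (1 : ENNReal))) h1
    (Or.inl ENNReal.one_ne_top)

lemma cramer_wold (ν₁ ν₂ : Measure (d → ℝ)) [IsProbabilityMeasure ν₁] [IsProbabilityMeasure ν₂]
    (h : ∀ a : d → ℝ, Measure.map (fun x => ∑ i, a i * x i) ν₁
      = Measure.map (fun x => ∑ i, a i * x i) ν₂) : ν₁ = ν₂ := by
  have hdot : ∀ a : d → ℝ, Measurable fun x : d → ℝ => ∑ i, a i * x i := fun a =>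
    Finset.measurable_sum _ fun i _ => (measurable_pi_apply i).const_mul _
  -- Step 1 : torus pushforwards agree
  have htorus : ∀ n : ℕ, 0 < n →
      Measure.map (fun (x : d → ℝ) i => (x i : AddCircle (n : ℝ))) ν₁ =
      Measure.map (fun (x : d → ℝ) i => (x i : AddCircle (n : ℝ))) ν₂ := by
    intro n hn
    have hn' : (0 : ℝ) < n := by exact_mod_cast hn
    haveI : Fact (0 < (n : ℝ)) := ⟨hn'⟩
    have hq : Measurable fun (x : d → ℝ) i => (x i : AddCircle (n : ℝ)) :=
      measurable_pi_lambda _ fun i => AddCircle.measurable_mk'.comp (measurable_pi_apply i)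
    haveI : IsProbabilityMeasure
        (Measure.map (fun (x : d → ℝ) i => (x i : AddCircle (n : ℝ))) ν₁) :=
      Measure.isProbabilityMeasure_map hq.aemeasurable
    haveI : IsProbabilityMeasure
        (Measure.map (fun (x : d → ℝ) i => (x i : AddCircle (n : ℝ))) ν₂) :=
      Measure.isProbabilityMeasure_map hq.aemeasurable
    refine torus_ext _ _ _ fun k => ?_
    rw [integral_map hq.aemeasurable (mfourier _ k).continuous.aestronglyMeasurable,
      integral_map hq.aemeasurable (mfourier _ k).continuous.aestronglyMeasurable]
    set a : d → ℝ := fun i => 2 * Real.pi * k i / n with ha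
    have hcoe : ∀ x : d → ℝ, mfourier (n : ℝ) k (fun i => (x i : AddCircle (n : ℝ))) =
        Complex.exp (Complex.I * ((∑ i, a i * x i : ℝ) : ℂ)) := fun x =>
      mfourier_comp_coe _ hn'.ne' k x
    simp_rw [hcoe]
    have hg : ∀ (m : Measure ℝ), AEStronglyMeasurable (fun t : ℝ =>
        Complex.exp (Complex.I * (t : ℂ))) m := fun m =>
      (Complex.continuous_exp.comp (continuous_const.mul Complex.continuous_ofReal)).aestronglyMeasurable
    calc ∫ x, Complex.exp (Complex.I * ((∑ i, a i * x i : ℝ) : ℂ)) ∂ν₁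
        = ∫ t, Complex.exp (Complex.I * (t : ℂ)) ∂(Measure.map (fun x => ∑ i, a i * x i) ν₁) :=
          (integral_map (hdot a).aemeasurable (hg _)).symm
      _ = ∫ t, Complex.exp (Complex.I * (t : ℂ)) ∂(Measure.map (fun x => ∑ i, a i * x i) ν₂) := by
          rw [h a]
      _ = ∫ x, Complex.exp (Complex.I * ((∑ i, a i * x i : ℝ) : ℂ)) ∂ν₂ :=
          integral_map (hdot a).aemeasurable (hg _)
  -- Step 2 : equality on compact sets
  have hcompact : ∀ B : Set (d → ℝ), IsCompact B → ν₁ B = ν₂ B := by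
    intro B hB
    obtain ⟨R, hR0, hR⟩ : ∃ R : ℝ, 0 < R ∧ ∀ x ∈ B, ∀ i, |x i| ≤ R := by
      obtain ⟨r, hr⟩ := hB.isBounded.subset_closedBall 0
      refine ⟨max r 1, lt_of_lt_of_le zero_lt_one (le_max_right _ _), fun x hx i => ?_⟩
      have := hr hx
      rw [Metric.mem_closedBall] at this
      calc |x i| = dist (x i) ((0 : d → ℝ) i) := by simp [Real.dist_eq]
        _ ≤ dist x 0 := dist_le_pi_dist x 0 i
        _ ≤ r := this
        _ ≤ max r 1 := le_max_left _ _
    have hkey : ∀ (μ₁ μ₂ : Measure (d → ℝ)) [IsProbabilityMeasure μ₁] [IsProbabilityMeasure μ₂],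
        (∀ n : ℕ, 0 < n →
          Measure.map (fun (x : d → ℝ) i => (x i : AddCircle (n : ℝ))) μ₁ =
          Measure.map (fun (x : d → ℝ) i => (x i : AddCircle (n : ℝ))) μ₂) →
        μ₁ B ≤ μ₂ B := by
      intro μ₁ μ₂ _ _ hmaps
      refine le_of_forall_pos_le_add fun ε hε => ?_
      have htail := tendsto_tail (d := d) μ₂
      have hev : ∀ᶠ m : ℕ in atTop, μ₂ (cube (d := d) (m : ℝ))ᶜ < ε :=
        htail.eventually_lt_const hε
      obtain ⟨m₀, hm₀⟩ := eventually_atTop.mp hev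
      obtain ⟨n, hngt⟩ := exists_nat_gt ((m₀ : ℝ) + R + 1)
      have hn : 0 < n := by
        by_contra hcon
        push_neg at hcon
        interval_cases n
        · simp only [Nat.cast_zero] at hngt
          have : (0:ℝ) ≤ (m₀ : ℝ) := Nat.cast_nonneg _
          linarith
      have hn' : (0 : ℝ) < n := by exact_mod_cast hn
      haveI : Fact (0 < (n : ℝ)) := ⟨hn'⟩
      have hRn : R + 1 ≤ (n : ℝ) - (m₀ : ℝ) := by linarith
      have hm0n : (m₀ : ℝ) ≤ (n : ℝ) - R := by linarith
      set q : (d → ℝ) → d → AddCircle (n : ℝ) := fun x i => (x i : AddCircle (n : ℝ)) with hqdef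
      have hqc : Continuous q :=
        continuous_pi fun i => (AddCircle.continuous_mk' _).comp (continuous_apply i)
      have hq : Measurable q := hqc.measurable
      have hqB : IsCompact (q '' B) := hB.image hqc
      have hqBm : MeasurableSet (q '' B) := hqB.isClosed.measurableSet
      have h1 : μ₁ B ≤ μ₁ (q ⁻¹' (q '' B)) := measure_mono (subset_preimage_image q B)
      have h2 : μ₁ (q ⁻¹' (q '' B)) = μ₂ (q ⁻¹' (q '' B)) := by
        rw [← Measure.map_apply hq hqBm, ← Measure.map_apply hq hqBm, hmaps n hn]
      have h3 : q ⁻¹' (q '' B) ⊆ B ∪ (cube ((n : ℝ) - R))ᶜ := by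
        rintro x ⟨b, hbB, hqb⟩
        by_cases hx : x ∈ cube (d := d) ((n : ℝ) - R)
        · left
          have hxb : x = b := by
            funext i
            have hiq : ((b i : ℝ) : AddCircle (n : ℝ)) = ((x i : ℝ) : AddCircle (n : ℝ)) :=
              congrFun hqb i
            rw [QuotientAddGroup.eq_iff_sub_mem] at hiq
            obtain ⟨c, hc⟩ := AddSubgroup.mem_zmultiples_iff.mp hiq
            have hcnum : (c : ℝ) * n = b i - x i := by
              rw [← hc, zsmul_eq_mul]
            have hub : |b i - x i| < (n : ℝ) := by
              have hbi : |b i| ≤ R := hR b hbB i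
              have hxi : |x i| < (n : ℝ) - R := hx i
              calc |b i - x i| ≤ |b i| + |x i| := abs_sub _ _
                _ < R + ((n : ℝ) - R) := by
                    apply add_lt_add_of_le_of_lt hbi hxi
                _ = (n : ℝ) := by ring
            have hc0 : c = 0 := by
              by_contra hc0
              have h1le : (1 : ℝ) ≤ |(c : ℝ)| := by
                exact_mod_cast Int.one_le_abs (by exact_mod_cast hc0)
              have : (n : ℝ) ≤ |(c : ℝ) * n| := by
                rw [abs_mul, abs_of_pos hn']
                nlinarith
              rw [hcnum] at this
              linarith
            have : b i - x i = 0 := by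
              rw [← hcnum, hc0]
              simp
            linarith [sub_eq_zero.mp this]
          rw [hxb]; exact hbB
        · right; exact hx
      have h4 : μ₂ (q ⁻¹' (q '' B)) ≤ μ₂ B + μ₂ (cube ((n : ℝ) - R))ᶜ :=
        le_trans (measure_mono h3) (measure_union_le _ _)
      have h5 : μ₂ (cube ((n : ℝ) - R))ᶜ ≤ ε := by
        refine le_trans (measure_mono (compl_subset_compl.mpr (cube_mono hm0n))) ?_
        exact le_of_lt (hm₀ m₀ le_rfl)
      calc μ₁ B ≤ μ₂ (q ⁻¹' (q '' B)) := h1.trans_eq h2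
        _ ≤ μ₂ B + μ₂ (cube ((n : ℝ) - R))ᶜ := h4
        _ ≤ μ₂ B + ε := add_le_add le_rfl h5
    exact le_antisymm (hkey ν₁ ν₂ htorus) (hkey ν₂ ν₁ fun n hn => (htorus n hn).symm)
  -- Step 3 : equality on closed sets
  have hclosed : ∀ F : Set (d → ℝ), IsClosed F → ν₁ F = ν₂ F := by
    intro F hF
    set cc : ℕ → Set (d → ℝ) := fun m => Set.pi univ fun _ : d => Icc (-(m : ℝ)) (m : ℝ) with hcc
    have hcomp : ∀ m, IsCompact (F ∩ cc m) := fun m =>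
      (isCompact_univ_pi fun _ => isCompact_Icc).inter_left hF
    have hmono : Monotone fun m => F ∩ cc m := by
      intro a b hab
      refine inter_subset_inter_right _ fun x hx i _ => ?_
      have := hx i (mem_univ i)
      simp only [mem_Icc] at this ⊢
      have hab' : (a : ℝ) ≤ b := by exact_mod_cast hab
      exact ⟨le_trans (by linarith) this.1, le_trans this.2 hab'⟩
    have hunion : ⋃ m, (F ∩ cc m) = F := by
      rw [← inter_iUnion]
      refine inter_eq_self_of_subset_left fun x _ => ?_
      simp only [mem_iUnion]
      obtain ⟨m, hm⟩ := exists_nat_gt (∑ i, |x i|)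
      refine ⟨m, fun i _ => ?_⟩
      have hle : |x i| ≤ (m : ℝ) := le_of_lt (lt_of_le_of_lt
        (Finset.single_le_sum (fun j _ => abs_nonneg (x j)) (Finset.mem_univ i)) hm)
      rw [abs_le] at hle
      exact hle
    have h₁ := tendsto_measure_iUnion_atTop (μ := ν₁) hmono
    have h₂ := tendsto_measure_iUnion_atTop (μ := ν₂) hmono
    rw [hunion] at h₁ h₂
    have heq : (fun m => ν₁ (F ∩ cc m)) = fun m => ν₂ (F ∩ cc m) :=
      funext fun m => hcompact _ (hcomp m)
    exact tendsto_nhds_unique (h₁.congr fun m => hcompact _ (hcomp m)) h₂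
  -- Step 4 : conclude
  refine ext_of_generate_finite _ ?_ isPiSystem_isClosed (fun F hF => hclosed F hF)
    (hclosed _ isClosed_univ)
  rw [BorelSpace.measurable_eq (α := d → ℝ), borel_eq_generateFrom_isClosed]


end GKSI

end

set_option maxHeartbeats 1000000 in
/-- **Swap-exchangeability of the joint Gaussian knockoff distribution.**
Let `p` be a positive integer, `μ ∈ ℝ^p`, `Σ` a real symmetric positive definite
`p×p` matrix, and `S` a real diagonal positive semidefinite `p×p` matrix with
`2Σ − S` positive semidefinite, and let `G = [[Σ, Σ−S],[Σ−S, Σ]]` (which is then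
positive semidefinite).  Let `ν` be the multivariate Gaussian measure on `ℝ^{2p}`
with mean `(μ, μ)` and covariance `G`.  For every subset `A ⊆ {1, …, p}`, the
pushforward of `ν` under the linear map `σ_A : ℝ^{2p} → ℝ^{2p}` that swaps
coordinate `j` with coordinate `p + j` for each `j ∈ A` equals `ν`. -/
theorem gaussian_knockoff_swap_invariant {p : ℕ} (hp : 0 < p)
    (μ : Fin p → ℝ) (Sig S : Matrix (Fin p) (Fin p) ℝ)
    (hSig : Sig.PosDef) (hSdiag : S.IsDiag) (hSpsd : S.PosSemidef)
    (h2 : ((2 : ℝ) • Sig - S).PosSemidef)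
    (ν : Measure ((Fin p ⊕ Fin p) → ℝ))
    (hν : IsMultivariateGaussian ν (Sum.elim μ μ)
      (Matrix.fromBlocks Sig (Sig - S) (Sig - S) Sig))
    (A : Finset (Fin p)) :
    Measure.map (fun x => x ∘ knockoffSwapFun A) ν = ν := by
  classical
  obtain ⟨hprob, hchar⟩ := hν
  haveI := hprob
  set σ : Fin p ⊕ Fin p → Fin p ⊕ Fin p := knockoffSwapFun A with hσdef
  set m : (Fin p ⊕ Fin p) → ℝ := Sum.elim μ μ with hmdef
  set G : Matrix (Fin p ⊕ Fin p) (Fin p ⊕ Fin p) ℝ :=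
    Matrix.fromBlocks Sig (Sig - S) (Sig - S) Sig with hGdef
  have hσσ : Function.Involutive σ := by
    intro i
    rcases i with j | j <;> by_cases hj : j ∈ A <;> simp [hσdef, knockoffSwapFun, hj]
  have hmσ : ∀ i, m (σ i) = m i := by
    intro i
    rcases i with j | j <;> by_cases hj : j ∈ A <;> simp [hσdef, hmdef, knockoffSwapFun, hj]
  have hGσ : ∀ i j, G (σ i) (σ j) = G i j := by
    have hS : ∀ u v : Fin p, u ≠ v → S u v = 0 := fun u v huv => hSdiag huv
    intro i j
    rcases i with i' | i' <;> rcases j with j' | j' <;>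
      by_cases hi : i' ∈ A <;> by_cases hj : j' ∈ A <;>
        simp only [hσdef, hGdef, knockoffSwapFun, hi, hj, if_true, if_false,
          Matrix.fromBlocks_apply₁₁, Matrix.fromBlocks_apply₁₂,
          Matrix.fromBlocks_apply₂₁, Matrix.fromBlocks_apply₂₂, Matrix.sub_apply] <;>
        first
          | rfl
          | (rw [hS i' j' (fun hE => by subst hE; exact absurd hi hj)]; ring)
          | (rw [hS i' j' (fun hE => by subst hE; exact absurd hj hi)]; ring)
  set e : Equiv.Perm (Fin p ⊕ Fin p) := Function.Involutive.toPerm σ hσσ with hedef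
  have he : ∀ i, e i = σ i := fun i => rfl
  have hmeasσ : Measurable fun x : (Fin p ⊕ Fin p) → ℝ => x ∘ σ :=
    measurable_pi_lambda _ fun i => measurable_pi_apply _
  haveI : IsProbabilityMeasure (Measure.map (fun x => x ∘ σ) ν) :=
    Measure.isProbabilityMeasure_map hmeasσ.aemeasurable
  refine GKSI.cramer_wold _ _ fun a => ?_
  have hdot : Measurable fun x : (Fin p ⊕ Fin p) → ℝ => ∑ i, a i * x i :=
    Finset.measurable_sum _ fun i _ => (measurable_pi_apply i).const_mul _
  rw [Measure.map_map hdot hmeasσ]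
  have hcomp : ((fun x : (Fin p ⊕ Fin p) → ℝ => ∑ i, a i * x i) ∘ fun x => x ∘ σ) =
      fun x => ∑ i, a (σ i) * x i := by
    funext x
    show ∑ i, a i * x (σ i) = ∑ i, a (σ i) * x i
    rw [← Equiv.sum_comp e fun i => a (σ i) * x i]
    refine Finset.sum_congr rfl fun i _ => ?_
    rw [he, hσσ i]
  rw [hcomp, hchar (fun i => a (σ i)), hchar a]
  have hmean : ∑ i, a (σ i) * m i = ∑ i, a i * m i := by
    calc ∑ i, a (σ i) * m i = ∑ i, a (σ i) * m (σ i) := by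
          refine Finset.sum_congr rfl fun i _ => ?_
          rw [hmσ]
      _ = ∑ i, a i * m i := Equiv.sum_comp e fun i => a i * m i
  have hvar : (fun i => a (σ i)) ⬝ᵥ G.mulVec (fun i => a (σ i)) = a ⬝ᵥ G.mulVec a := by
    simp only [dotProduct, Matrix.mulVec]
    calc ∑ i, a (σ i) * ∑ j, G i j * a (σ j)
        = ∑ i, a (σ i) * ∑ j, G i (σ j) * a j := by
          refine Finset.sum_congr rfl fun i _ => ?_
          congr 1
          rw [← Equiv.sum_comp e fun j => G i (σ j) * a j]
          refine Finset.sum_congr rfl fun j _ => ?_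
          rw [he, hσσ j]
      _ = ∑ i, a i * ∑ j, G (σ i) (σ j) * a j := by
          rw [← Equiv.sum_comp e fun i => a i * ∑ j, G (σ i) (σ j) * a j]
          refine Finset.sum_congr rfl fun i _ => ?_
          rw [he, hσσ i]
      _ = ∑ i, a i * ∑ j, G i j * a j := by
          refine Finset.sum_congr rfl fun i _ => ?_
          congr 1
          refine Finset.sum_congr rfl fun j _ => ?_
          rw [hGσ]
  rw [hmean, hvar]
end

section
/- Let p be a positive integer, Σ a real symmetric positive definite p×p matrix, S a real symmetric positive semidefinite p×p matrix with 2Σ − S positive semidefinite, and L a real p×p matrix with L Lᵀ = 2S − S Σ⁻¹ S. Let X be a random vector in ℝ^p with the multivariate Gaussian distribution of mean 0 and covariance Σ, and U an independent random vector in ℝ^p with the standard multivariate Gaussian distribution (mean 0, identity covariance). Define X̃ = (I − SΣ⁻¹) X + L U. Then the joint random vector (X, X̃) in ℝ^{2p} has the multivariate Gaussian distribution with mean 0 and covariance G = [[Σ, Σ−S],[Σ−S, Σ]]. -/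
open MeasureTheory Matrix

section KnockoffAux
open Real ProbabilityTheory
open scoped NNReal ENNReal

private lemma conv_pdf (m₁ m₂ : ℝ) (v₁ v₂ : ℝ≥0) (h₁ : v₁ ≠ 0) (h₂ : v₂ ≠ 0) (y : ℝ) :
    ∫ x, gaussianPDFReal m₁ v₁ x * gaussianPDFReal m₂ v₂ (y - x) =
      gaussianPDFReal (m₁ + m₂) (v₁ + v₂) y := by
  have hv₁ : (0:ℝ) < v₁ := by positivity
  have hv₂ : (0:ℝ) < v₂ := by positivity
  set b : ℝ := ((v₁:ℝ) + v₂) / (2 * v₁ * v₂) with hbdef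
  set c : ℝ := m₁ + v₁ * (y - m₁ - m₂) / ((v₁:ℝ) + v₂) with hcdef
  have hb : 0 < b := by positivity
  have hpt : ∀ x, gaussianPDFReal m₁ v₁ x * gaussianPDFReal m₂ v₂ (y - x) =
      gaussianPDFReal (m₁ + m₂) (v₁ + v₂) y * (Real.sqrt (b / π) * rexp (-b * (x - c)^2)) := by
    intro x
    simp only [gaussianPDFReal, NNReal.coe_add]
    have hconst : (Real.sqrt (2 * π * v₁))⁻¹ * (Real.sqrt (2 * π * v₂))⁻¹ =
        (Real.sqrt (2 * π * ((v₁:ℝ) + v₂)))⁻¹ * Real.sqrt (b / π) := by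
      rw [← Real.sqrt_inv, ← Real.sqrt_inv, ← Real.sqrt_inv,
        ← Real.sqrt_mul (by positivity), ← Real.sqrt_mul (by positivity)]
      congr 1
      rw [hbdef]
      field_simp
    have hexp : rexp (-(x - m₁)^2 / (2 * v₁)) * rexp (-(y - x - m₂)^2 / (2 * v₂)) =
        rexp (-(y - (m₁ + m₂))^2 / (2 * ((v₁:ℝ) + v₂))) * rexp (-b * (x - c)^2) := by
      rw [← Real.exp_add, ← Real.exp_add]
      congr 1
      rw [hbdef, hcdef]
      field_simp
      ring
    calc (Real.sqrt (2 * π * v₁))⁻¹ * rexp (-(x - m₁)^2 / (2 * v₁)) *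
          ((Real.sqrt (2 * π * v₂))⁻¹ * rexp (-(y - x - m₂)^2 / (2 * v₂)))
        = ((Real.sqrt (2 * π * v₁))⁻¹ * (Real.sqrt (2 * π * v₂))⁻¹) *
          (rexp (-(x - m₁)^2 / (2 * v₁)) * rexp (-(y - x - m₂)^2 / (2 * v₂))) := by ring
      _ = ((Real.sqrt (2 * π * ((v₁:ℝ) + v₂)))⁻¹ * Real.sqrt (b / π)) *
          (rexp (-(y - (m₁ + m₂))^2 / (2 * ((v₁:ℝ) + v₂))) * rexp (-b * (x - c)^2)) := by
          rw [hconst, hexp]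
      _ = _ := by ring
  simp_rw [hpt]
  rw [MeasureTheory.integral_const_mul, MeasureTheory.integral_const_mul]
  have : ∫ x, rexp (-b * (x - c)^2) = Real.sqrt (π / b) := by
    rw [integral_sub_right_eq_self (fun x => rexp (-b * x^2)) c, integral_gaussian]
  rw [this, ← Real.sqrt_mul (by positivity)]
  have : b / π * (π / b) = 1 := by field_simp
  rw [this, Real.sqrt_one, mul_one]

private lemma integrable_conv (m₁ m₂ : ℝ) (v₁ v₂ : ℝ≥0) (h₁ : v₁ ≠ 0) (h₂ : v₂ ≠ 0) (y : ℝ) :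
    Integrable (fun x => gaussianPDFReal m₁ v₁ x * gaussianPDFReal m₂ v₂ (y - x)) := by
  have hv₁ : (0:ℝ) < v₁ := by positivity
  have hv₂ : (0:ℝ) < v₂ := by positivity
  -- bound: p₁ x * p₂ (y-x) ≤ C * p₁ x  where C = sup of p₂
  have hC : ∀ x, ‖gaussianPDFReal m₁ v₁ x * gaussianPDFReal m₂ v₂ (y - x)‖ ≤
      (Real.sqrt (2 * π * v₂))⁻¹ * gaussianPDFReal m₁ v₁ x := by
    intro x
    rw [Real.norm_of_nonneg (mul_nonneg (gaussianPDFReal_nonneg _ _ _) (gaussianPDFReal_nonneg _ _ _))]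
    rw [mul_comm]
    apply mul_le_mul_of_nonneg_right _ (gaussianPDFReal_nonneg _ _ _)
    unfold gaussianPDFReal
    calc (Real.sqrt (2 * π * v₂))⁻¹ * rexp (-(y - x - m₂)^2 / (2 * v₂))
        ≤ (Real.sqrt (2 * π * v₂))⁻¹ * 1 := by
          apply mul_le_mul_of_nonneg_left _ (by positivity)
          rw [← Real.exp_zero]
          apply Real.exp_le_exp.mpr
          apply div_nonpos_of_nonpos_of_nonneg (neg_nonpos.mpr (sq_nonneg _)) (by positivity)
      _ = (Real.sqrt (2 * π * v₂))⁻¹ := mul_one _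
  exact Integrable.mono ((integrable_gaussianPDFReal m₁ v₁).const_mul _)
    ((measurable_gaussianPDFReal m₁ v₁).mul
      ((measurable_gaussianPDFReal m₂ v₂).comp (measurable_const.sub measurable_id))).aestronglyMeasurable
    (Filter.Eventually.of_forall (fun x => (hC x).trans (le_abs_self _)))

private lemma gaussianReal_conv (m₁ m₂ : ℝ) (v₁ v₂ : ℝ≥0) :
    ((gaussianReal m₁ v₁).prod (gaussianReal m₂ v₂)).map (fun z : ℝ × ℝ => z.1 + z.2)
      = gaussianReal (m₁ + m₂) (v₁ + v₂) := by
  by_cases h₁ : v₁ = 0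
  · subst h₁
    rw [gaussianReal_zero_var, Measure.dirac_prod, Measure.map_map (by fun_prop) (by fun_prop)]
    have : ((fun z : ℝ × ℝ => z.1 + z.2) ∘ Prod.mk m₁) = (m₁ + ·) := rfl
    rw [this, gaussianReal_map_const_add, add_comm m₂ m₁, zero_add]
  by_cases h₂ : v₂ = 0
  · subst h₂
    rw [gaussianReal_zero_var, Measure.prod_dirac, Measure.map_map (by fun_prop) (by fun_prop)]
    have : ((fun z : ℝ × ℝ => z.1 + z.2) ∘ (fun x : ℝ => (x, m₂))) = (· + m₂) := rfl
    rw [this, gaussianReal_map_add_const, add_zero]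
  -- main case
  have h₁₂ : v₁ + v₂ ≠ 0 := by simp [h₁]
  ext s hs
  rw [Measure.map_apply (by fun_prop) hs,
    Measure.prod_apply ((by fun_prop : Measurable (fun z : ℝ × ℝ => z.1 + z.2)) hs),
    gaussianReal_of_var_ne_zero _ h₁₂, withDensity_apply _ hs]
  have hpre : ∀ x : ℝ, (Prod.mk x ⁻¹' ((fun z : ℝ × ℝ => z.1 + z.2) ⁻¹' s)) =
      ((x + ·) ⁻¹' s) := fun x => rfl
  have key : ∀ x : ℝ, (gaussianReal m₂ v₂) ((x + ·) ⁻¹' s) =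
      ∫⁻ z in s, ENNReal.ofReal (gaussianPDFReal m₂ v₂ (z - x)) := by
    intro x
    rw [gaussianReal_of_var_ne_zero _ h₂,
      withDensity_apply _ ((measurable_const_add x) hs)]
    have hmp : MeasurePreserving (fun y : ℝ => x + y) volume volume :=
      measurePreserving_add_left volume x
    have := hmp.setLIntegral_comp_preimage_emb
      (measurableEmbedding_addLeft x) (fun z => ENNReal.ofReal (gaussianPDFReal m₂ v₂ (z - x))) s
    simp only [add_sub_cancel_left] at this
    rw [← this]; rfl
  simp_rw [hpre, key, gaussianReal_of_var_ne_zero _ h₁]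
  have hmeas2 : Measurable (Function.uncurry fun x z =>
      ENNReal.ofReal (gaussianPDFReal m₂ v₂ (z - x))) :=
    ((measurable_gaussianPDFReal m₂ v₂).comp (measurable_snd.sub measurable_fst)).ennreal_ofReal
  rw [lintegral_withDensity_eq_lintegral_mul _ (measurable_gaussianPDF m₁ v₁)
    (Measurable.lintegral_prod_right hmeas2)]
  have step : ∀ x : ℝ, gaussianPDF m₁ v₁ x * ∫⁻ z in s, ENNReal.ofReal (gaussianPDFReal m₂ v₂ (z - x)) =
      ∫⁻ z in s, ENNReal.ofReal (gaussianPDFReal m₁ v₁ x * gaussianPDFReal m₂ v₂ (z - x)) := by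
    intro x
    have hm : Measurable fun z : ℝ => ENNReal.ofReal (gaussianPDFReal m₂ v₂ (z - x)) :=
      ((measurable_gaussianPDFReal m₂ v₂).comp (measurable_sub_const x)).ennreal_ofReal
    rw [← lintegral_const_mul _ hm]
    congr 1 with z
    rw [gaussianPDF, ← ENNReal.ofReal_mul (gaussianPDFReal_nonneg _ _ _)]
  simp only [Pi.mul_apply]
  simp_rw [step]
  have hm2 : AEMeasurable (fun q : ℝ × ℝ =>
      ENNReal.ofReal (gaussianPDFReal m₁ v₁ q.1 * gaussianPDFReal m₂ v₂ (q.2 - q.1)))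
      (volume.prod (volume.restrict s)) :=
    (((measurable_gaussianPDFReal m₁ v₁).comp measurable_fst |>.mul
      ((measurable_gaussianPDFReal m₂ v₂).comp (measurable_snd.sub measurable_fst))).ennreal_ofReal).aemeasurable
  rw [lintegral_lintegral_swap hm2]
  congr 1 with z
  rw [← ofReal_integral_eq_lintegral_ofReal (integrable_conv m₁ m₂ v₁ v₂ h₁ h₂ z)
    (Filter.Eventually.of_forall fun x =>
      mul_nonneg (gaussianPDFReal_nonneg _ _ _) (gaussianPDFReal_nonneg _ _ _)),
    conv_pdf m₁ m₂ v₁ v₂ h₁ h₂ z]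
  rfl

private lemma indep_gaussian_add {Ω : Type*} [MeasurableSpace Ω] (P : Measure Ω)
    [IsProbabilityMeasure P] (f g : Ω → ℝ) (hf : Measurable f) (hg : Measurable g)
    (h : IndepFun f g P) (m₁ m₂ : ℝ) (v₁ v₂ : ℝ≥0)
    (h1 : P.map f = gaussianReal m₁ v₁) (h2 : P.map g = gaussianReal m₂ v₂) :
    P.map (fun ω => f ω + g ω) = gaussianReal (m₁ + m₂) (v₁ + v₂) := by
  have hpair : P.map (fun ω => (f ω, g ω)) = (P.map f).prod (P.map g) :=
    (indepFun_iff_map_prod_eq_prod_map_map hf.aemeasurable hg.aemeasurable).mp h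
  have : P.map (fun ω => f ω + g ω)
      = (P.map (fun ω => (f ω, g ω))).map (fun z : ℝ × ℝ => z.1 + z.2) := by
    rw [Measure.map_map (by fun_prop : Measurable (fun z : ℝ × ℝ => z.1 + z.2)) (hf.prodMk hg)]
    rfl
  rw [this, hpair, h1, h2, gaussianReal_conv]

end KnockoffAux

section KnockoffMain
open Real ProbabilityTheory
open scoped NNReal ENNReal

/-- **Distributional correctness of Gaussian knockoff sampling.**
Let `p` be a positive integer, `Σ` a real symmetric positive definite `p×p` matrix,
`S` a real symmetric positive semidefinite `p×p` matrix with `2Σ − S` positive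
semidefinite, and `L` a real `p×p` matrix with `L Lᵀ = 2S − S Σ⁻¹ S`.  Let `X` be a
random vector in `ℝ^p` with the multivariate Gaussian distribution of mean `0` and
covariance `Σ`, and `U` an independent random vector in `ℝ^p` with the standard
multivariate Gaussian distribution (mean `0`, identity covariance).  Define
`X̃ = (I − SΣ⁻¹) X + L U`.  Then the joint random vector `(X, X̃)` in `ℝ^{2p}` has
the multivariate Gaussian distribution with mean `0` and covariance
`G = [[Σ, Σ−S],[Σ−S, Σ]]`. -/
theorem gaussian_knockoff_sampling_law {p : ℕ} (hp : 0 < p)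
    (Sig S L : Matrix (Fin p) (Fin p) ℝ)
    (hSig : Sig.PosDef) (hSpsd : S.PosSemidef)
    (h2 : ((2 : ℝ) • Sig - S).PosSemidef)
    (hL : L * Lᵀ = (2 : ℝ) • S - S * Sig⁻¹ * S)
    {Ω : Type*} [MeasurableSpace Ω] (P : Measure Ω) [IsProbabilityMeasure P]
    (X U : Ω → (Fin p → ℝ)) (hX : Measurable X) (hU : Measurable U)
    (hXU : ProbabilityTheory.IndepFun X U P)
    (hXlaw : IsMultivariateGaussian (P.map X) 0 Sig)
    (hUlaw : IsMultivariateGaussian (P.map U) 0 1) :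
    IsMultivariateGaussian
      (P.map fun ω =>
        Sum.elim (X ω) (((1 - S * Sig⁻¹).mulVec (X ω)) + L.mulVec (U ω)))
      0 (Matrix.fromBlocks Sig (Sig - S) (Sig - S) Sig) := by
  -- matrix preliminaries
  have hdet : IsUnit Sig.det := hSig.det_pos.ne'.isUnit
  have hinv1 : Sig * Sig⁻¹ = 1 := Matrix.mul_nonsing_inv _ hdet
  have hinv2 : Sig⁻¹ * Sig = 1 := Matrix.nonsing_inv_mul _ hdet
  have hSigT : Sigᵀ = Sig := by
    rw [← Matrix.conjTranspose_eq_transpose_of_trivial]; exact hSig.isHermitian.eq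
  have hST : Sᵀ = S := by
    rw [← Matrix.conjTranspose_eq_transpose_of_trivial]; exact hSpsd.1.eq
  have hSigInvT : (Sig⁻¹)ᵀ = Sig⁻¹ := by
    rw [Matrix.transpose_nonsing_inv, hSigT]
  set M : Matrix (Fin p) (Fin p) ℝ := 1 - S * Sig⁻¹ with hM
  have hMT : Mᵀ = 1 - Sig⁻¹ * S := by
    rw [hM, Matrix.transpose_sub, Matrix.transpose_one, Matrix.transpose_mul, hSigInvT, hST]
  -- measurability of dot products and the joint map
  have hdot : ∀ v : Fin p → ℝ, Measurable fun x : Fin p → ℝ => v ⬝ᵥ x := by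
    intro v
    exact Finset.measurable_sum _ fun i _ => (measurable_pi_apply i).const_mul _
  have hY : Measurable fun ω => Sum.elim (X ω) (M.mulVec (X ω) + L.mulVec (U ω)) := by
    apply measurable_pi_lambda
    intro i
    cases i with
    | inl i => exact (measurable_pi_apply i).comp hX
    | inr i =>
      have h1 : Measurable fun ω => M.mulVec (X ω) i := by
        simp only [Matrix.mulVec, dotProduct]
        exact Finset.measurable_sum _ fun j _ => ((measurable_pi_apply j).comp hX).const_mul _
      have h2 : Measurable fun ω => L.mulVec (U ω) i := by
        simp only [Matrix.mulVec, dotProduct]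
        exact Finset.measurable_sum _ fun j _ => ((measurable_pi_apply j).comp hU).const_mul _
      exact h1.add h2
  constructor
  · exact Measure.isProbabilityMeasure_map hY.aemeasurable
  intro a
  set a₁ : Fin p → ℝ := a ∘ Sum.inl with ha₁
  set a₂ : Fin p → ℝ := a ∘ Sum.inr with ha₂
  set b : Fin p → ℝ := a₁ + Mᵀ.mulVec a₂ with hb
  set c : Fin p → ℝ := Lᵀ.mulVec a₂ with hc
  -- pointwise identity of the linear functional
  have hpt : ∀ ω, (∑ i, a i * Sum.elim (X ω) (M.mulVec (X ω) + L.mulVec (U ω)) i)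
      = b ⬝ᵥ X ω + c ⬝ᵥ U ω := by
    intro ω
    rw [Fintype.sum_sum_type]
    have e1 : ∑ i, a (Sum.inl i) * X ω i = a₁ ⬝ᵥ X ω := rfl
    have e2 : ∑ i, a (Sum.inr i) * (M.mulVec (X ω) + L.mulVec (U ω)) i
        = a₂ ⬝ᵥ (M.mulVec (X ω) + L.mulVec (U ω)) := rfl
    simp only [Sum.elim_inl, Sum.elim_inr, e1, e2]
    rw [dotProduct_add, hb, add_dotProduct,
      Matrix.mulVec_transpose, ← Matrix.dotProduct_mulVec,
      hc, Matrix.mulVec_transpose, ← Matrix.dotProduct_mulVec]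
    ring
  -- laws of the two components
  have hbXlaw : P.map (fun ω => b ⬝ᵥ X ω) =
      gaussianReal 0 (Real.toNNReal (b ⬝ᵥ Sig.mulVec b)) := by
    have := hXlaw.2 b
    simp only [Pi.zero_apply, mul_zero, Finset.sum_const_zero] at this
    have hm : Measurable fun x : Fin p → ℝ => ∑ i, b i * x i := hdot b
    rw [Measure.map_map hm hX] at this
    exact this
  have hcUlaw : P.map (fun ω => c ⬝ᵥ U ω) =
      gaussianReal 0 (Real.toNNReal (c ⬝ᵥ c)) := by
    have := hUlaw.2 c
    simp only [Pi.zero_apply, mul_zero, Finset.sum_const_zero, Matrix.one_mulVec] at this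
    have hm : Measurable fun x : Fin p → ℝ => ∑ i, c i * x i := hdot c
    rw [Measure.map_map hm hU] at this
    exact this
  -- independence of the two components
  have hindep : IndepFun (fun ω => b ⬝ᵥ X ω) (fun ω => c ⬝ᵥ U ω) P :=
    hXU.comp (hdot b) (hdot c)
  -- combine
  have hmap : P.map (fun ω => ∑ i, a i * Sum.elim (X ω) (M.mulVec (X ω) + L.mulVec (U ω)) i)
      = gaussianReal 0 (Real.toNNReal (b ⬝ᵥ Sig.mulVec b) + Real.toNNReal (c ⬝ᵥ c)) := by
    have := indep_gaussian_add P _ _ ((hdot b).comp hX) ((hdot c).comp hU) hindep 0 0 _ _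
      hbXlaw hcUlaw
    simp only [add_zero] at this
    calc P.map (fun ω => ∑ i, a i * Sum.elim (X ω) (M.mulVec (X ω) + L.mulVec (U ω)) i)
        = P.map (fun ω => b ⬝ᵥ X ω + c ⬝ᵥ U ω) := by
          congr 1; ext ω; exact hpt ω
      _ = _ := this
  -- variance identity
  have hvb : 0 ≤ b ⬝ᵥ Sig.mulVec b := by
    have := hSig.posSemidef.dotProduct_mulVec_nonneg b
    simpa using this
  have hvc : 0 ≤ c ⬝ᵥ c := Finset.sum_nonneg fun i _ => mul_self_nonneg _
  have hvar : b ⬝ᵥ Sig.mulVec b + c ⬝ᵥ c =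
      a ⬝ᵥ (Matrix.fromBlocks Sig (Sig - S) (Sig - S) Sig).mulVec a := by
    have ha : a = Sum.elim a₁ a₂ := by ext i; cases i <;> rfl
    -- helper
    have htw : ∀ (A : Matrix (Fin p) (Fin p) ℝ) (x y : Fin p → ℝ),
        (Aᵀ.mulVec x) ⬝ᵥ y = x ⬝ᵥ A.mulVec y := by
      intro A x y
      rw [Matrix.mulVec_transpose, ← Matrix.dotProduct_mulVec]
    have key1 : Sig * Mᵀ = Sig - S := by
      rw [hMT, Matrix.mul_sub, Matrix.mul_one, ← Matrix.mul_assoc, hinv1, Matrix.one_mul]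
    have key2 : M * Sig = Sig - S := by
      rw [hM, Matrix.sub_mul, Matrix.one_mul, Matrix.mul_assoc, hinv2, Matrix.mul_one]
    have key3 : M * (Sig - S) + L * Lᵀ = Sig := by
      rw [hL, hM]
      have : S * Sig⁻¹ * Sig = S := by rw [Matrix.mul_assoc, hinv2, Matrix.mul_one]
      rw [Matrix.sub_mul, Matrix.one_mul, Matrix.mul_sub, this, two_smul ℝ S]
      abel
    calc b ⬝ᵥ Sig.mulVec b + c ⬝ᵥ c
        = (a₁ + Mᵀ.mulVec a₂) ⬝ᵥ (Sig.mulVec a₁ + (Sig * Mᵀ).mulVec a₂)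
          + (Lᵀ.mulVec a₂) ⬝ᵥ (Lᵀ.mulVec a₂) := by
          rw [hb, hc, Matrix.mulVec_add, Matrix.mulVec_mulVec]
      _ = a₁ ⬝ᵥ Sig.mulVec a₁ + a₁ ⬝ᵥ (Sig * Mᵀ).mulVec a₂
          + (a₂ ⬝ᵥ (M * Sig).mulVec a₁ + a₂ ⬝ᵥ (M * (Sig * Mᵀ)).mulVec a₂)
          + a₂ ⬝ᵥ (L * Lᵀ).mulVec a₂ := by
          rw [add_dotProduct, dotProduct_add, dotProduct_add,
            htw M a₂ (Sig.mulVec a₁), htw M a₂ ((Sig * Mᵀ).mulVec a₂),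
            htw L a₂ (Lᵀ.mulVec a₂), Matrix.mulVec_mulVec, Matrix.mulVec_mulVec,
            Matrix.mulVec_mulVec]
      _ = a₁ ⬝ᵥ Sig.mulVec a₁ + a₁ ⬝ᵥ (Sig - S).mulVec a₂
          + a₂ ⬝ᵥ (Sig - S).mulVec a₁ + a₂ ⬝ᵥ Sig.mulVec a₂ := by
          rw [key1, key2]
          have : a₂ ⬝ᵥ (M * (Sig - S)).mulVec a₂ + a₂ ⬝ᵥ (L * Lᵀ).mulVec a₂
              = a₂ ⬝ᵥ Sig.mulVec a₂ := by
            rw [← dotProduct_add, ← Matrix.add_mulVec, key3]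
          linarith [this]
      _ = a ⬝ᵥ (Matrix.fromBlocks Sig (Sig - S) (Sig - S) Sig).mulVec a := by
          rw [ha, Matrix.fromBlocks_mulVec, sumElim_dotProduct_sumElim,
            dotProduct_add, dotProduct_add]
          simp only [Sum.elim_comp_inl, Sum.elim_comp_inr]
          ring
  have hsummeas : Measurable fun x : (Fin p ⊕ Fin p) → ℝ => ∑ i, a i * x i :=
    Finset.measurable_sum _ fun i _ => (measurable_pi_apply i).const_mul _
  rw [Measure.map_map hsummeas hY]
  have hcomp : ((fun x : (Fin p ⊕ Fin p) → ℝ => ∑ i, a i * x i) ∘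
      fun ω => Sum.elim (X ω) (M.mulVec (X ω) + L.mulVec (U ω)))
      = fun ω => ∑ i, a i * Sum.elim (X ω) (M.mulVec (X ω) + L.mulVec (U ω)) i := rfl
  rw [hcomp, hmap, ← Real.toNNReal_add hvb hvc, hvar]
  congr 1
  simp

end KnockoffMain
end

section
/- Let ε_1, …, ε_k be i.i.d. random variables uniform on {−1, +1} with k ≥ 1, and for 0 ≤ j ≤ k let V⁺(j) = #{i ≤ j : ε_i = +1} and V⁻(j) = j − V⁺(j). Then for every v ∈ {0, 1, …, k}: E[ (V⁺(k−1) / (1 + V⁻(k−1))) · 1{V⁺(k) = v} ] ≤ (v / (1 + k − v)) · P(V⁺(k) = v), with equality whenever v < k. -/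
open MeasureTheory Finset

/-- `V⁺(j)`: the number of the first `j` signs `ε_1, …, ε_j` that equal `+1`
(with 1-based sign `ε_i` modelled as the 0-based entry `ε ⟨i-1⟩`). -/
def Vplus {Ω : Type*} {k : ℕ} (ε : Fin k → Ω → ℤ) (j : ℕ) (ω : Ω) : ℕ :=
  (univ.filter fun i : Fin k => (i : ℕ) < j ∧ ε i ω = 1).card

/-- `V⁻(j) = j − V⁺(j)`: the number of the first `j` signs that equal `−1`. -/
def Vminus {Ω : Type*} {k : ℕ} (ε : Fin k → Ω → ℤ) (j : ℕ) (ω : Ω) : ℕ :=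
  j - Vplus ε j ω

private lemma SR_lt_last {k : ℕ} (hk : 1 ≤ k) (i : Fin k) :
    (i : ℕ) < k - 1 ↔ i ≠ (⟨k - 1, by omega⟩ : Fin k) := by
  constructor
  · rintro h rfl; simp at h
  · intro h
    have := i.2
    rcases lt_or_eq_of_le (Nat.le_of_lt_succ (by omega : (i : ℕ) < (k-1) + 1)) with h' | h'
    · exact h'
    · exact absurd (Fin.ext h') h

private lemma SR_cardA {k v : ℕ} (hk : 1 ≤ k) (hv1 : 1 ≤ v) :
    ((univ : Finset (Finset (Fin k))).filter
      (fun S => S.card = v ∧ (⟨k - 1, by omega⟩ : Fin k) ∈ S)).card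
      = (k - 1).choose (v - 1) := by
  set a : Fin k := ⟨k - 1, by omega⟩
  rw [show (k-1).choose (v-1) = ((univ.erase a).powersetCard (v-1)).card by
    rw [card_powersetCard, card_erase_of_mem (mem_univ a), card_univ, Fintype.card_fin]]
  apply card_bij (fun S _ => S.erase a)
  · intro S hS
    simp only [mem_filter, mem_univ, true_and] at hS
    rw [mem_powersetCard]
    exact ⟨erase_subset_erase a (subset_univ S), by rw [card_erase_of_mem hS.2, hS.1]⟩
  · intro S hS T hT h
    simp only [mem_filter, mem_univ, true_and] at hS hT
    rw [← insert_erase hS.2, ← insert_erase hT.2, h]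
  · intro T hT
    rw [mem_powersetCard] at hT
    have haT : a ∉ T := fun h => (mem_erase.mp (hT.1 h)).1 rfl
    refine ⟨insert a T, ?_, by rw [erase_insert haT]⟩
    simp only [mem_filter, mem_univ, true_and]
    exact ⟨by rw [card_insert_of_notMem haT, hT.2]; omega, mem_insert_self a T⟩

private lemma SR_cardB {k v : ℕ} (hk : 1 ≤ k) :
    ((univ : Finset (Finset (Fin k))).filter
      (fun S => S.card = v ∧ ¬ (⟨k - 1, by omega⟩ : Fin k) ∈ S)).card
      = (k - 1).choose v := by
  set a : Fin k := ⟨k - 1, by omega⟩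
  rw [show (k-1).choose v = ((univ.erase a).powersetCard v).card by
    rw [card_powersetCard, card_erase_of_mem (mem_univ a), card_univ, Fintype.card_fin]]
  congr 1
  ext S
  simp only [mem_filter, mem_univ, true_and, mem_powersetCard, subset_erase, subset_univ,
    true_and, and_comm]

private lemma SR_term {k v : ℕ} (hk : 1 ≤ k) (hv : v ≤ k) (S : Finset (Fin k))
    (hS : S.card = v) :
    ((S.filter fun i : Fin k => (i : ℕ) < k - 1).card : ℝ)
        / (1 + ((k - 1 - (S.filter fun i : Fin k => (i : ℕ) < k - 1).card : ℕ) : ℝ))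
      = if (⟨k - 1, by omega⟩ : Fin k) ∈ S then
          ((v - 1 : ℕ) : ℝ) / (1 + ((k - v : ℕ) : ℝ))
        else (v : ℝ) / (1 + ((k - 1 - v : ℕ) : ℝ)) := by
  set a : Fin k := ⟨k - 1, by omega⟩
  have hfil : S.filter (fun i : Fin k => (i : ℕ) < k - 1) = S.erase a := by
    ext i
    simp [mem_erase, SR_lt_last hk i, and_comm]
    exact fun _ => Iff.rfl
  by_cases ha : a ∈ S
  · have hv1 : 1 ≤ v := hS ▸ card_pos.mpr ⟨a, ha⟩
    rw [hfil, if_pos ha, card_erase_of_mem ha, hS,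
      show k - 1 - (v - 1) = k - v from by omega]
  · have hvk : v ≤ k - 1 := by
      by_contra h
      have : S = univ := eq_univ_of_card S (by rw [hS, Fintype.card_fin]; omega)
      exact ha (this ▸ mem_univ a)
    rw [hfil, if_neg ha, erase_eq_of_notMem ha, hS]

/-- the combinatorial core: equality for `v < k` -/
private lemma SR_comb_eq {k v : ℕ} (hk : 1 ≤ k) (hv : v < k) :
    (∑ S ∈ (univ : Finset (Finset (Fin k))).filter (fun S => S.card = v),
      ((S.filter fun i : Fin k => (i : ℕ) < k - 1).card : ℝ)
        / (1 + ((k - 1 - (S.filter fun i : Fin k => (i : ℕ) < k - 1).card : ℕ) : ℝ)))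
      = (v : ℝ) / (1 + (k : ℝ) - (v : ℝ))
        * ((univ : Finset (Finset (Fin k))).filter (fun S => S.card = v)).card := by
  classical
  set a : Fin k := ⟨k - 1, by omega⟩
  rcases Nat.eq_zero_or_pos v with rfl | hv1
  · have hz : ∀ S ∈ (univ : Finset (Finset (Fin k))).filter (fun S => S.card = 0),
        ((S.filter fun i : Fin k => (i : ℕ) < k - 1).card : ℝ)
          / (1 + ((k - 1 - (S.filter fun i : Fin k => (i : ℕ) < k - 1).card : ℕ) : ℝ))
          = 0 := by
      intro S hS
      simp only [mem_filter, mem_univ, true_and, card_eq_zero] at hS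
      subst hS
      simp
    rw [Finset.sum_congr rfl hz, sum_const_zero, Nat.cast_zero, zero_div, zero_mul]
  -- v ≥ 1
  have key := Finset.sum_filter_add_sum_filter_not
    ((univ : Finset (Finset (Fin k))).filter (fun S => S.card = v)) (fun S => a ∈ S)
    (fun S => ((S.filter fun i : Fin k => (i : ℕ) < k - 1).card : ℝ)
        / (1 + ((k - 1 - (S.filter fun i : Fin k => (i : ℕ) < k - 1).card : ℕ) : ℝ)))
  rw [← key, filter_filter, filter_filter]
  have hA := SR_cardA (k := k) (v := v) hk hv1
  have hB := SR_cardB (k := k) (v := v) hk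
  have e1 : ∑ S ∈ (univ : Finset (Finset (Fin k))).filter (fun S => S.card = v ∧ a ∈ S),
      ((S.filter fun i : Fin k => (i : ℕ) < k - 1).card : ℝ)
        / (1 + ((k - 1 - (S.filter fun i : Fin k => (i : ℕ) < k - 1).card : ℕ) : ℝ))
      = ((k-1).choose (v-1) : ℝ) * (((v - 1 : ℕ) : ℝ) / (1 + ((k - v : ℕ) : ℝ))) := by
    have h' : ∀ S ∈ (univ : Finset (Finset (Fin k))).filter (fun S => S.card = v ∧ a ∈ S),
        ((S.filter fun i : Fin k => (i : ℕ) < k - 1).card : ℝ)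
          / (1 + ((k - 1 - (S.filter fun i : Fin k => (i : ℕ) < k - 1).card : ℕ) : ℝ))
        = ((v - 1 : ℕ) : ℝ) / (1 + ((k - v : ℕ) : ℝ)) := by
      intro S hS
      rw [mem_filter] at hS
      rw [SR_term hk hv.le S hS.2.1, if_pos hS.2.2]
    rw [Finset.sum_congr rfl h', sum_const, hA, nsmul_eq_mul]
  have e2 : ∑ S ∈ (univ : Finset (Finset (Fin k))).filter (fun S => S.card = v ∧ ¬ a ∈ S),
      ((S.filter fun i : Fin k => (i : ℕ) < k - 1).card : ℝ)
        / (1 + ((k - 1 - (S.filter fun i : Fin k => (i : ℕ) < k - 1).card : ℕ) : ℝ))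
      = ((k-1).choose v : ℝ) * ((v : ℝ) / (1 + ((k - 1 - v : ℕ) : ℝ))) := by
    have h' : ∀ S ∈ (univ : Finset (Finset (Fin k))).filter (fun S => S.card = v ∧ ¬ a ∈ S),
        ((S.filter fun i : Fin k => (i : ℕ) < k - 1).card : ℝ)
          / (1 + ((k - 1 - (S.filter fun i : Fin k => (i : ℕ) < k - 1).card : ℕ) : ℝ))
        = (v : ℝ) / (1 + ((k - 1 - v : ℕ) : ℝ)) := by
      intro S hS
      rw [mem_filter] at hS
      rw [SR_term hk hv.le S hS.2.1, if_neg hS.2.2]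
    rw [Finset.sum_congr rfl h', sum_const, hB, nsmul_eq_mul]
  rw [e1, e2]
  have hcard : (((univ : Finset (Finset (Fin k))).filter (fun S => S.card = v)).card : ℝ)
      = ((k-1).choose (v-1) : ℝ) + ((k-1).choose v : ℝ) := by
    rw [← hA, ← hB, ← Nat.cast_add, ← Finset.filter_filter, ← Finset.filter_filter,
      Finset.card_filter_add_card_filter_not (p := fun S => a ∈ S)]
  rw [hcard]
  -- arithmetic
  have hrel : ((k-1).choose v : ℝ) * v = ((k-1).choose (v-1) : ℝ) * ((k : ℝ) - v) := by
    have := Nat.choose_succ_right_eq (k-1) (v-1)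
    rw [show v - 1 + 1 = v by omega] at this
    have h2 : (k - 1) - (v - 1) = k - v := by omega
    rw [h2] at this
    have := congrArg (fun n : ℕ => (n : ℝ)) this
    push_cast at this
    rw [this, Nat.cast_sub hv.le]
  have h1 : ((v - 1 : ℕ) : ℝ) = (v : ℝ) - 1 := by
    rw [Nat.cast_sub hv1]; norm_num
  have h2 : ((k - v : ℕ) : ℝ) = (k : ℝ) - v := Nat.cast_sub hv.le
  have h3 : ((k - 1 - v : ℕ) : ℝ) = (k : ℝ) - 1 - v := by
    rw [Nat.cast_sub (by omega), Nat.cast_sub hk]; norm_num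
  rw [h1, h2, h3]
  have hK : (k : ℝ) - v ≥ 1 := by
    have : (v : ℝ) + 1 ≤ k := by exact_mod_cast hv
    linarith
  have hKne : (k : ℝ) - v ≠ 0 := by linarith
  have d1 : (1 : ℝ) + (k : ℝ) - (v : ℝ) ≠ 0 := by linarith
  rw [show (1 : ℝ) + ((k : ℝ) - 1 - (v : ℝ)) = (k : ℝ) - v from by ring,
    show (1 : ℝ) + ((k : ℝ) - (v : ℝ)) = 1 + (k : ℝ) - (v : ℝ) from by ring]
  have e : ((k-1).choose v : ℝ) * ((v : ℝ) / ((k : ℝ) - v)) = ((k-1).choose (v-1) : ℝ) := by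
    rw [(mul_div_assoc _ _ _).symm, hrel, mul_div_assoc, div_self hKne, mul_one]
  rw [e]
  field_simp
  nlinarith [hrel]

private lemma SR_comb_le {k v : ℕ} (hk : 1 ≤ k) (hv : v ≤ k) :
    (∑ S ∈ (univ : Finset (Finset (Fin k))).filter (fun S => S.card = v),
      ((S.filter fun i : Fin k => (i : ℕ) < k - 1).card : ℝ)
        / (1 + ((k - 1 - (S.filter fun i : Fin k => (i : ℕ) < k - 1).card : ℕ) : ℝ)))
      ≤ (v : ℝ) / (1 + (k : ℝ) - (v : ℝ))
        * ((univ : Finset (Finset (Fin k))).filter (fun S => S.card = v)).card := by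
  rcases lt_or_eq_of_le hv with h | h
  · exact le_of_eq (SR_comb_eq hk h)
  · subst h
    have hset : (univ : Finset (Finset (Fin v))).filter (fun S => S.card = v) = {univ} := by
      ext S
      simp only [mem_filter, mem_univ, true_and, mem_singleton]
      constructor
      · intro h; exact eq_univ_of_card S (by rw [h, Fintype.card_fin])
      · rintro rfl; rw [card_univ, Fintype.card_fin]
    rw [hset, sum_singleton, card_singleton]
    have hfu : ((univ : Finset (Fin v)).filter fun i : Fin v => (i : ℕ) < v - 1).card
        = v - 1 := by
      have : ((univ : Finset (Fin v)).filter fun i : Fin v => (i : ℕ) < v - 1)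
          = univ.erase (⟨v - 1, by omega⟩ : Fin v) := by
        ext i; simp [mem_erase, SR_lt_last hk i]
      rw [this, card_erase_of_mem (mem_univ _), card_univ, Fintype.card_fin]
    rw [hfu, Nat.sub_self, Nat.cast_zero, Nat.cast_one, mul_one,
      show (1 : ℝ) + (v : ℝ) - v = 1 from by ring, div_one, add_zero, div_one,
      Nat.cast_sub hk]
    have : (1:ℝ) ≤ v := by exact_mod_cast hk
    push_cast
    linarith

private lemma SR_main {Ω : Type*} [MeasurableSpace Ω]
    (P : Measure Ω) [IsProbabilityMeasure P] (k : ℕ) (hk : 1 ≤ k)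
    (ε : Fin k → Ω → ℤ) (hmeas : ∀ i, Measurable (ε i))
    (hindep : ProbabilityTheory.iIndepFun ε P)
    (hplus : ∀ i, P (ε i ⁻¹' {1}) = 1 / 2)
    (hminus : ∀ i, P (ε i ⁻¹' {-1}) = 1 / 2)
    (v : ℕ) (hv : v ≤ k) :
    (∫ ω, (if Vplus ε k ω = v then
          (Vplus ε (k - 1) ω : ℝ) / (1 + (Vminus ε (k - 1) ω : ℝ)) else 0) ∂P =
        (∑ S ∈ (univ : Finset (Finset (Fin k))).filter (fun S => S.card = v),
          ((S.filter fun i : Fin k => (i : ℕ) < k - 1).card : ℝ)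
            / (1 + ((k - 1 - (S.filter fun i : Fin k => (i : ℕ) < k - 1).card : ℕ) : ℝ)))
          * ((1 / 2 : ℝ) ^ k)) ∧
      (P {ω | Vplus ε k ω = v}).toReal
        = (((univ : Finset (Finset (Fin k))).filter (fun S => S.card = v)).card : ℝ)
          * ((1 / 2 : ℝ) ^ k) := by
  classical
  set f : ℤ → ℤ := fun x => if x = 1 then 1 else -1 with hf
  set g : Fin k → Ω → ℤ := fun i => f ∘ ε i with hgdef
  have hg_meas : ∀ i, Measurable (g i) := fun i => (measurable_of_countable f).comp (hmeas i)
  have hg_indep : ProbabilityTheory.iIndepFun g P :=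
    hindep.comp (fun _ => f) (fun _ => measurable_of_countable f)
  have hval : ∀ i ω, g i ω = 1 ∨ g i ω = -1 := by
    intro i ω
    by_cases h : ε i ω = 1
    · left; simp [hgdef, hf, h]
    · right; simp [hgdef, hf, h]
  have hg1 : ∀ i, g i ⁻¹' {1} = ε i ⁻¹' {1} := by
    intro i; ext ω
    simp only [Set.mem_preimage, Set.mem_singleton_iff, hgdef, hf, Function.comp_apply]
    split_ifs with h
    · simp [h]
    · simp [h]
  have hgm : ∀ i, g i ⁻¹' {-1} = (ε i ⁻¹' {1})ᶜ := by
    intro i; ext ω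
    simp only [Set.mem_preimage, Set.mem_singleton_iff, Set.mem_compl_iff, hgdef, hf,
      Function.comp_apply]
    split_ifs with h
    · simp [h]
    · simp [h]
  have hP1 : ∀ i, P (g i ⁻¹' {1}) = 1 / 2 := fun i => by rw [hg1]; exact hplus i
  have hPm : ∀ i, P (g i ⁻¹' {-1}) = 1 / 2 := by
    intro i
    rw [hgm, prob_compl_eq_one_sub ((hmeas i) (measurableSet_singleton 1)), hplus i]
    rw [one_div, ENNReal.one_sub_inv_two]
  set E : Finset (Fin k) → Set Ω :=
    fun S => ⋂ i, g i ⁻¹' {if i ∈ S then (1 : ℤ) else -1} with hE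
  have hEmeas : ∀ S, MeasurableSet (E S) :=
    fun S => MeasurableSet.iInter fun i => (hg_meas i) (measurableSet_singleton _)
  have hEprob : ∀ S, P (E S) = (1 / 2 : ENNReal) ^ k := by
    intro S
    rw [hE]
    rw [hg_indep.meas_iInter
      (fun i => ⟨{if i ∈ S then (1 : ℤ) else -1}, measurableSet_singleton _, rfl⟩)]
    have h2 : ∀ i : Fin k, i ∈ univ →
        P (g i ⁻¹' {if i ∈ S then (1 : ℤ) else -1}) = 1 / 2 := by
      intro i _
      by_cases h : i ∈ S
      · rw [if_pos h]; exact hP1 i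
      · rw [if_neg h]; exact hPm i
    rw [Finset.prod_congr rfl h2, prod_const, card_univ, Fintype.card_fin]
  set Sof : Ω → Finset (Fin k) := fun ω => univ.filter (fun i => g i ω = 1) with hSof
  have hmem : ∀ ω S, ω ∈ E S ↔ Sof ω = S := by
    intro ω S
    simp only [hE, Set.mem_iInter, Set.mem_preimage, Set.mem_singleton_iff]
    constructor
    · intro h
      ext i
      simp only [hSof, mem_filter, mem_univ, true_and]
      rw [h i]
      by_cases hi : i ∈ S
      · simp [hi]
      · simp only [if_neg hi]
        constructor
        · intro h'; norm_num at h'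
        · intro h'; exact absurd h' hi
    · rintro rfl
      intro i
      by_cases hi : g i ω = 1
      · rw [if_pos (by simp [hSof, hi]), hi]
      · rw [if_neg (by simp [hSof, hi])]
        rcases hval i ω with h | h
        · exact absurd h hi
        · exact h
  have hcover : ∀ ω, ω ∈ E (Sof ω) := fun ω => (hmem ω _).mpr rfl
  have hVg : ∀ ω j, Vplus g j ω = ((Sof ω).filter fun i : Fin k => (i : ℕ) < j).card := by
    intro ω j
    unfold Vplus
    congr 1
    ext i
    simp only [mem_filter, mem_univ, true_and, hSof]
    tauto
  have hVk : ∀ ω, Vplus g k ω = (Sof ω).card := by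
    intro ω
    rw [hVg ω k]
    congr 1
    exact Finset.filter_true_of_mem (fun i _ => i.2)
  -- a.e. equality of ε and g
  have hae : ∀ᵐ ω ∂P, ∀ i, ε i ω = g i ω := by
    rw [MeasureTheory.ae_all_iff]
    intro i
    have hsub : {ω | ¬ ε i ω = g i ω} ⊆ (ε i ⁻¹' {1} ∪ ε i ⁻¹' {-1})ᶜ := by
      intro ω h
      simp only [Set.mem_setOf_eq] at h
      simp only [Set.mem_compl_iff, Set.mem_union, Set.mem_preimage, Set.mem_singleton_iff]
      rintro (h1 | h1) <;> simp [hgdef, hf, h1] at h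
    refine measure_mono_null hsub ?_
    have hd : Disjoint (ε i ⁻¹' {1}) (ε i ⁻¹' {-1}) := by
      rw [Set.disjoint_left]
      intro ω h1 h2
      simp only [Set.mem_preimage, Set.mem_singleton_iff] at h1 h2
      rw [h1] at h2; norm_num at h2
    have hu : P (ε i ⁻¹' {1} ∪ ε i ⁻¹' {-1}) = 1 := by
      rw [measure_union hd ((hmeas i) (measurableSet_singleton _)), hplus i, hminus i,
        one_div, ENNReal.inv_two_add_inv_two]
    rw [prob_compl_eq_one_sub
      (((hmeas i) (measurableSet_singleton _)).union ((hmeas i) (measurableSet_singleton _))),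
      hu, tsub_self]
  have hVae : ∀ᵐ ω ∂P, ∀ j, Vplus ε j ω = Vplus g j ω := by
    filter_upwards [hae] with ω hω j
    unfold Vplus
    congr 1
    apply Finset.filter_congr
    intro i _
    rw [hω i]
  -- the value of the integrand on E S
  set cval : Finset (Fin k) → ℝ := fun S => if S.card = v then
      ((S.filter fun i : Fin k => (i : ℕ) < k - 1).card : ℝ)
        / (1 + ((k - 1 - (S.filter fun i : Fin k => (i : ℕ) < k - 1).card : ℕ) : ℝ))
    else 0 with hcval
  have haeF : (fun ω => if Vplus ε k ω = v then
      (Vplus ε (k - 1) ω : ℝ) / (1 + (Vminus ε (k - 1) ω : ℝ)) else 0) =ᵐ[P]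
      (fun ω => ∑ S : Finset (Fin k), (E S).indicator (fun _ => cval S) ω) := by
    filter_upwards [hVae] with ω hω
    have hstep : (fun S : Finset (Fin k) => (E S).indicator (fun _ => cval S) ω) =
        fun S => if S = Sof ω then cval (Sof ω) else 0 := by
      funext S
      by_cases h : S = Sof ω
      · subst h; rw [Set.indicator_of_mem (hcover ω), if_pos rfl]
      · rw [Set.indicator_of_notMem (fun hm => h ((hmem ω S).mp hm).symm), if_neg h]
    rw [hstep, Finset.sum_ite_eq' univ (Sof ω) (fun _ => cval (Sof ω)), if_pos (mem_univ _)]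
    simp only [Vminus, hω, hVk ω, hVg ω (k - 1), hcval]
  have hint : ∫ ω, (if Vplus ε k ω = v then
      (Vplus ε (k - 1) ω : ℝ) / (1 + (Vminus ε (k - 1) ω : ℝ)) else 0) ∂P
      = ∑ S : Finset (Fin k), cval S * ((1 / 2 : ℝ) ^ k) := by
    rw [integral_congr_ae haeF,
      integral_finset_sum _ (fun S _ => (integrable_const (cval S)).indicator (hEmeas S))]
    refine Finset.sum_congr rfl (fun S _ => ?_)
    rw [integral_indicator_const (cval S) (hEmeas S), measureReal_def, hEprob S, smul_eq_mul, mul_comm]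
    congr 1
    rw [ENNReal.toReal_pow]
    norm_num
  constructor
  · rw [hint, ← Finset.sum_mul, Finset.sum_filter (fun S : Finset (Fin k) => S.card = v)]
  · have hPset : P {ω | Vplus ε k ω = v} = P {ω | Vplus g k ω = v} := by
      apply measure_congr
      rw [Filter.eventuallyEq_set]
      filter_upwards [hVae] with ω hω
      simp only [Set.mem_setOf_eq, hω k]
    have hset : {ω | Vplus g k ω = v}
        = ⋃ S ∈ (univ : Finset (Finset (Fin k))).filter (fun S => S.card = v), E S := by
      ext ω
      simp only [Set.mem_setOf_eq, Set.mem_iUnion, mem_filter, mem_univ, true_and]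
      constructor
      · intro h
        exact ⟨Sof ω, ⟨by rw [← hVk ω, h], hcover ω⟩⟩
      · rintro ⟨S, hcard, hmemS⟩
        rw [hVk ω, (hmem ω S).mp hmemS, hcard]
    have hd : ((univ : Finset (Finset (Fin k))).filter
        (fun S => S.card = v) : Set (Finset (Fin k))).PairwiseDisjoint E := by
      intro S _ T _ hne
      rw [Function.onFun, Set.disjoint_left]
      intro ω hS hT
      exact hne (((hmem ω S).mp hS).symm.trans ((hmem ω T).mp hT))
    rw [hPset, hset, measure_biUnion_finset hd (fun S _ => hEmeas S),
      Finset.sum_congr rfl (fun S _ => hEprob S), sum_const, nsmul_eq_mul,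
      ENNReal.toReal_mul, ENNReal.toReal_natCast, ENNReal.toReal_pow]
    norm_num

/-- **One-step supermartingale inequality for the sign ratio process.**
Let `ε_1, …, ε_k` be i.i.d. random variables uniform on `{−1, +1}` with `k ≥ 1`,
and for `0 ≤ j ≤ k` let `V⁺(j) = #{i ≤ j : ε_i = +1}` and `V⁻(j) = j − V⁺(j)`.
Then for every `v ∈ {0, 1, …, k}`:
`E[ (V⁺(k−1) / (1 + V⁻(k−1))) · 1{V⁺(k) = v} ] ≤ (v / (1 + k − v)) · P(V⁺(k) = v)`,
with equality whenever `v < k`. -/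
theorem sign_ratio_one_step {Ω : Type*} [MeasurableSpace Ω]
    (P : Measure Ω) [IsProbabilityMeasure P] (k : ℕ) (hk : 1 ≤ k)
    (ε : Fin k → Ω → ℤ) (hmeas : ∀ i, Measurable (ε i))
    (hindep : ProbabilityTheory.iIndepFun ε P)
    (hplus : ∀ i, P (ε i ⁻¹' {1}) = 1 / 2)
    (hminus : ∀ i, P (ε i ⁻¹' {-1}) = 1 / 2)
    (v : ℕ) (hv : v ≤ k) :
    (∫ ω, (if Vplus ε k ω = v then
          (Vplus ε (k - 1) ω : ℝ) / (1 + (Vminus ε (k - 1) ω : ℝ)) else 0) ∂P ≤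
        (v : ℝ) / (1 + (k : ℝ) - (v : ℝ)) * (P {ω | Vplus ε k ω = v}).toReal) ∧
      (v < k →
        ∫ ω, (if Vplus ε k ω = v then
            (Vplus ε (k - 1) ω : ℝ) / (1 + (Vminus ε (k - 1) ω : ℝ)) else 0) ∂P =
          (v : ℝ) / (1 + (k : ℝ) - (v : ℝ)) * (P {ω | Vplus ε k ω = v}).toReal) := by
  obtain ⟨h1, h2⟩ := SR_main P k hk ε hmeas hindep hplus hminus v hv
  have hq : (0 : ℝ) ≤ (1 / 2 : ℝ) ^ k := by positivity
  constructor
  · rw [h1, h2]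
    refine le_trans (mul_le_mul_of_nonneg_right (SR_comb_le hk hv) hq) (le_of_eq (by ring))
  · intro hvk
    rw [h1, h2, SR_comb_eq hk hvk]
    ring
end
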